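/- arXiv:1606.03340 — 5 statements merged into one kernel-verified Lean document; each statement's English description precedes it below -/
import Mathlib

section
/- Let (X,d,μ) be a metric measure space and λ: X×(0,∞)→(0,∞) a dominating function with constant C_λ, i.e. r ↦ λ(x,r) is nondecreasing and μ(B(x,r)) ≤ λ(x,r) ≤ C_λ·λ(x,r/2) for all x ∈ X and r > 0. Define λ̃(x,r) := inf_{z ∈ X} λ(z, r + d(x,z)). Then λ̃ is again a dominating function with the same constant C_λ (i.e. nondecreasing in r and μ(B(x,r)) ≤ λ̃(x,r) ≤ C_λ·λ̃(x,r/2)), satisfies λ̃(x,r) ≤ λ(x,r) for all x and r, and has the additional property λ̃(x,r) ≤ C_λ·λ̃(y,r) whenever d(x,y) ≤ r. -/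
open MeasureTheory Metric Set ENNReal

noncomputable section

variable {X : Type*} [MetricSpace X] [MeasurableSpace X] [BorelSpace X]

/-- The support of a measure on a metric space: points all of whose balls have
positive measure. -/
def msupport (μ : Measure X) : Set X := {x | ∀ r : ℝ, 0 < r → 0 < μ (ball x r)}

/-- `(X, d, μ)` is upper doubling with dominating function `lam` and constant `Cl`. -/
structure IsUpperDoubling (μ : Measure X) (lam : X → ℝ → ℝ) (Cl : ℝ) : Prop where
  one_lt : 1 < Cl
  lam_pos : ∀ x r, 0 < r → 0 < lam x r
  lam_mono : ∀ x r₁ r₂, 0 < r₁ → r₁ ≤ r₂ → lam x r₁ ≤ lam x r₂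
  measure_le : ∀ x r, 0 < r → μ (ball x r) ≤ ENNReal.ofReal (lam x r)
  halving : ∀ x r, 0 < r → lam x r ≤ Cl * lam x (r / 2)
  close : ∀ x y r, 0 < r → dist x y ≤ r → lam x r ≤ Cl * lam y r

/-- `(X, d)` is geometrically doubling with constant `C` and doubling dimension `n`:
every `r`-separated subset of a ball of radius `R ≥ r` has cardinality at most `C (R/r)^n`. -/
def GeometricallyDoubling (X : Type*) [MetricSpace X] (C : ℝ) (n : ℕ) : Prop :=
  ∀ (x : X) (R r : ℝ), 0 < r → r ≤ R →
    ∀ S : Finset X, (↑S : Set X) ⊆ ball x R →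
      (∀ a ∈ S, ∀ b ∈ S, a ≠ b → r ≤ dist a b) → (S.card : ℝ) ≤ C * (R / r) ^ n

/-- `ω` is a Dini modulus of continuity. -/
structure IsDiniModulus (ω : ℝ → ℝ) : Prop where
  nonneg : ∀ t, 0 ≤ t → 0 ≤ ω t
  mono : MonotoneOn ω (Set.Ici 0)
  subadd : ∀ s t, 0 ≤ s → 0 ≤ t → ω (s + t) ≤ ω s + ω t
  zero : ω 0 = 0
  pos : ∀ t, 0 < t → 0 < ω t
  summable : Summable (fun j : ℕ => ω ((2 : ℝ) ^ (-(j : ℤ))))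

/-- The Dini norm `∑_{j ≥ 0} ω(2^{-j})`. -/
def diniNorm (ω : ℝ → ℝ) : ℝ := ∑' j : ℕ, ω ((2 : ℝ) ^ (-(j : ℤ)))

/-- `K` is a Calderón–Zygmund kernel with size constant `CK` and modulus of continuity `ω`,
relative to the dominating function `lam`. -/
structure IsCZKernel (lam : X → ℝ → ℝ) (K : X → X → ℂ) (CK : ℝ) (ω : ℝ → ℝ) : Prop where
  size : ∀ x y, x ≠ y → ‖K x y‖ ≤ CK / lam x (dist x y)
  smooth : ∀ x x' y, x ≠ y → dist x x' < dist x y / 2 →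
    ‖K x y - K x' y‖ + ‖K y x - K y x'‖ ≤ ω (dist x x' / dist x y) / lam x (dist x y)

/-- The maximal truncation `T^♯ f(x) = sup_{ε > 0} |∫_{d(x,y) > ε} K(x,y) f(y) dμ(y)|`,
valued in `ℝ≥0∞`. -/
noncomputable def Tsharp (μ : Measure X) (K : X → X → ℂ) (f : X → ℂ) (x : X) : ℝ≥0∞ :=
  ⨆ (ε : ℝ) (_ : 0 < ε), ENNReal.ofReal ‖∫ y in (closedBall x ε)ᶜ, K x y * f y ∂μ‖

/-- `T` is an `L²(μ)`-bounded Calderón–Zygmund operator with kernel `K` and `L²` norm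
bound `CT`. -/
structure IsCZOperator (μ : Measure X) (K : X → X → ℂ) (T : (X → ℂ) → X → ℂ) (CT : ℝ) :
    Prop where
  map_add : ∀ f g, MemLp f 2 μ → MemLp g 2 μ → T (f + g) = T f + T g
  map_smul : ∀ (c : ℂ) (f), MemLp f 2 μ → T (c • f) = c • T f
  norm_bound : ∀ f, MemLp f 2 μ → eLpNorm (T f) 2 μ ≤ ENNReal.ofReal CT * eLpNorm f 2 μ
  rep : ∀ f : X → ℂ, (∃ M, ∀ x, ‖f x‖ ≤ M) → Bornology.IsBounded (Function.support f) →
    ∀ x, x ∉ tsupport f → T f x = ∫ y, K x y * f y ∂μ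

/-- A David–Mattila lattice with parameters `C0, A0` associated to `μ`:
for each generation `k` a Borel partition `cells k` of `supp μ`, each cell `Q` carrying a
ball `B(Q) = B(center k Q, radius k Q)`. -/
structure DavidMattila (μ : Measure X) (C0 A0 : ℝ) where
  cells : ℕ → Set (Set X)
  center : ℕ → Set X → X
  radius : ℕ → Set X → ℝ
  measurable : ∀ k, ∀ Q ∈ cells k, MeasurableSet Q
  cover : ∀ k, ⋃₀ cells k = msupport μ
  pairwise_disjoint : ∀ k, ∀ Q ∈ cells k, ∀ R ∈ cells k, Q ≠ R → Disjoint Q R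
  nested : ∀ k l, k < l → ∀ Q ∈ cells l, ∀ R ∈ cells k, Q ⊆ R ∨ Disjoint Q R
  center_mem : ∀ k, ∀ Q ∈ cells k, center k Q ∈ msupport μ
  radius_lb : ∀ k, ∀ Q ∈ cells k, A0 ^ (-(k : ℤ)) ≤ radius k Q
  radius_ub : ∀ k, ∀ Q ∈ cells k, radius k Q ≤ C0 * A0 ^ (-(k : ℤ))
  ball_subset : ∀ k, ∀ Q ∈ cells k, msupport μ ∩ ball (center k Q) (radius k Q) ⊆ Q
  subset_ball : ∀ k, ∀ Q ∈ cells k, Q ⊆ msupport μ ∩ ball (center k Q) (28 * radius k Q)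
  disjoint_five : ∀ k, ∀ Q ∈ cells k, ∀ R ∈ cells k, Q ≠ R →
    Disjoint (ball (center k Q) (5 * radius k Q)) (ball (center k R) (5 * radius k R))
  nondoubling : ∀ k, ∀ Q ∈ cells k,
    ENNReal.ofReal C0 * μ (ball (center k Q) (radius k Q)) <
        μ (ball (center k Q) (100 * radius k Q)) →
      radius k Q = A0 ^ (-(k : ℤ)) ∧
      ∀ c : ℝ, 1 ≤ c → c ≤ C0 →
        ENNReal.ofReal C0 * μ (ball (center k Q) (c * radius k Q)) ≤
          μ (ball (center k Q) (100 * c * radius k Q))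

/-- The average `A(f,Q) = μ(αB(Q))⁻¹ ∫_{30B(Q)} |f| dμ` attached to a ball `B(z,r)`. -/
noncomputable def cellAvg (μ : Measure X) (α : ℝ) (f : X → ℂ) (z : X) (r : ℝ) : ℝ≥0∞ :=
  (∫⁻ y in ball z (30 * r), ‖f y‖₊ ∂μ) / μ (ball z (α * r))

/-- `Θ(Q) = μ(αB(Q)) / λ(z_Q, α r(Q))`. -/
noncomputable def theta (μ : Measure X) (lam : X → ℝ → ℝ) (α : ℝ) (z : X) (r : ℝ) : ℝ≥0∞ :=
  μ (ball z (α * r)) / ENNReal.ofReal (lam z (α * r))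

/-- The maximal function `M_λ f(x) = sup_{R>0} λ(x,R)⁻¹ ∫_{B(x,R)} |f| dμ`. -/
noncomputable def Mlam (μ : Measure X) (lam : X → ℝ → ℝ) (f : X → ℂ) (x : X) : ℝ≥0∞ :=
  ⨆ (R : ℝ) (_ : 0 < R), (∫⁻ y in ball x R, ‖f y‖₊ ∂μ) / ENNReal.ofReal (lam x R)

/-- The localized grand maximal truncated operator `N_{Q₀}`. -/
noncomputable def grandMax (μ : Measure X) {C0 A0 : ℝ} (D : DavidMattila μ C0 A0)
    (K : X → X → ℂ) (Q0 : Set X) (f : X → ℂ) (x : X) : ℝ≥0∞ :=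
  Q0.indicator (fun x' =>
    ⨆ (k : ℕ) (P : Set X) (_ : P ∈ D.cells k) (_ : x' ∈ P) (_ : P ⊆ Q0) (y : X) (_ : y ∈ P),
      ENNReal.ofReal
        ‖∫ z in (ball (D.center k P) (30 * D.radius k P))ᶜ, K y z * f z ∂μ‖) x

/-- `∫_S w dμ` for a weight `w`. -/
noncomputable def wInt (μ : Measure X) (w : X → ℝ) (S : Set X) : ℝ≥0∞ :=
  ∫⁻ x in S, ENNReal.ofReal (w x) ∂μ

end
open MeasureTheory Metric Set ENNReal in
/-- Regularization of a dominating function: `λ̃(x,r) = inf_z λ(z, r + d(x,z))` is again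
a dominating function with the same constant, is dominated by `λ`, and satisfies
`λ̃(x,r) ≤ C_λ λ̃(y,r)` whenever `d(x,y) ≤ r`. -/
theorem dominating_function_regularization
    {X : Type*} [MetricSpace X] [MeasurableSpace X] [BorelSpace X] [Nonempty X]
    (μ : Measure X) [IsLocallyFiniteMeasure μ]
    (lam : X → ℝ → ℝ) (Cl : ℝ) (hCl : 1 < Cl)
    (hpos : ∀ x r, 0 < r → 0 < lam x r)
    (hmono : ∀ x r₁ r₂, 0 < r₁ → r₁ ≤ r₂ → lam x r₁ ≤ lam x r₂)
    (hmeas : ∀ x r, 0 < r → μ (ball x r) ≤ ENNReal.ofReal (lam x r))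
    (hhalf : ∀ x r, 0 < r → lam x r ≤ Cl * lam x (r / 2)) :
    (∀ x r₁ r₂, 0 < r₁ → r₁ ≤ r₂ →
        (⨅ z : X, lam z (r₁ + dist x z)) ≤ ⨅ z : X, lam z (r₂ + dist x z)) ∧
    (∀ x r, 0 < r → μ (ball x r) ≤ ENNReal.ofReal (⨅ z : X, lam z (r + dist x z))) ∧
    (∀ x r, 0 < r →
        (⨅ z : X, lam z (r + dist x z)) ≤ Cl * ⨅ z : X, lam z (r / 2 + dist x z)) ∧
    (∀ x r, 0 < r → (⨅ z : X, lam z (r + dist x z)) ≤ lam x r) ∧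
    (∀ x y r, 0 < r → dist x y ≤ r →
        (⨅ z : X, lam z (r + dist x z)) ≤ Cl * ⨅ z : X, lam z (r + dist y z)) := by

  have hCl0 : (0:ℝ) ≤ Cl := le_of_lt (lt_trans one_pos hCl)
  have hbdd : ∀ (x : X) (r : ℝ), 0 < r →
      BddBelow (Set.range fun z : X => lam z (r + dist x z)) := by
    intro x r hr
    refine ⟨0, ?_⟩
    rintro y ⟨z, rfl⟩
    exact (hpos z (r + dist x z) (by positivity)).le
  have hle : ∀ (x : X) (r : ℝ) (z : X), 0 < r →
      (⨅ w : X, lam w (r + dist x w)) ≤ lam z (r + dist x z) := by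
    intro x r z hr
    exact ciInf_le (hbdd x r hr) z
  refine ⟨?_, ?_, ?_, ?_, ?_⟩
  · -- monotone
    intro x r₁ r₂ h1 h12
    refine le_ciInf fun z => ?_
    refine (hle x r₁ z h1).trans ?_
    exact hmono z _ _ (by positivity) (by linarith)
  · -- measure
    intro x r hr
    have hfin : μ (ball x r) ≠ ⊤ :=
      ne_top_of_le_ne_top ENNReal.ofReal_ne_top (hmeas x r hr)
    rw [ENNReal.le_ofReal_iff_toReal_le hfin]
    · refine le_ciInf fun z => ?_
      have hsub : ball x r ⊆ ball z (r + dist x z) := by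
        intro y hy
        rw [mem_ball] at hy ⊢
        calc dist y z ≤ dist y x + dist x z := dist_triangle y x z
          _ < r + dist x z := by linarith
      have h1 : μ (ball x r) ≤ ENNReal.ofReal (lam z (r + dist x z)) :=
        (measure_mono hsub).trans (hmeas z _ (by positivity))
      calc (μ (ball x r)).toReal
          ≤ (ENNReal.ofReal (lam z (r + dist x z))).toReal :=
            ENNReal.toReal_mono ENNReal.ofReal_ne_top h1
        _ ≤ lam z (r + dist x z) := le_of_eq (ENNReal.toReal_ofReal (hpos z _ (by positivity)).le)
    · exact le_ciInf fun z => (hpos z _ (by positivity)).le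
  · -- halving
    intro x r hr
    rw [Real.mul_iInf_of_nonneg hCl0]
    refine le_ciInf fun z => ?_
    have h1 := hle x r z hr
    have h2 := hhalf z (r + dist x z) (by positivity)
    have h3 : lam z ((r + dist x z) / 2) ≤ lam z (r / 2 + dist x z) := by
      have hd : (0:ℝ) ≤ dist x z := dist_nonneg
      exact hmono z _ _ (by positivity) (by linarith)
    calc (⨅ w : X, lam w (r + dist x w)) ≤ lam z (r + dist x z) := h1
      _ ≤ Cl * lam z ((r + dist x z) / 2) := h2
      _ ≤ Cl * lam z (r / 2 + dist x z) := by nlinarith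
  · -- dominated by lam
    intro x r hr
    have := hle x r x hr
    simpa using this
  · -- close
    intro x y r hr hxy
    rw [Real.mul_iInf_of_nonneg hCl0]
    refine le_ciInf fun z => ?_
    have h1 := hle x r z hr
    have hd : (0:ℝ) ≤ dist y z := dist_nonneg
    have h2 : lam z (r + dist x z) ≤ lam z (2 * (r + dist y z)) := by
      have := dist_triangle x y z
      exact hmono z _ _ (by positivity) (by linarith)
    have h3 := hhalf z (2 * (r + dist y z)) (by positivity)
    have h4 : lam z (2 * (r + dist y z) / 2) = lam z (r + dist y z) := by ring_nf
    calc (⨅ w : X, lam w (r + dist x w)) ≤ lam z (r + dist x z) := h1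
      _ ≤ lam z (2 * (r + dist y z)) := h2
      _ ≤ Cl * lam z (2 * (r + dist y z) / 2) := h3
      _ = Cl * lam z (r + dist y z) := by rw [h4]
end

section
/- Let (X,d,μ) be upper doubling with dominating function λ and constant C_λ, and let K be a Calderón–Zygmund kernel on X with constant C_K and Dini modulus ω. Then there is a constant C depending only on C_λ such that for every ball B(z,r), all points x, x' ∈ B(z, 28r), and every f ∈ L¹_loc(μ): |∫_{X∖B(z,30r)} (K(x,y) − K(x',y)) f(y) dμ(y)| ≤ C·‖ω‖_Dini·M_λ f(x), where M_λ f(x) := sup_{R>0} λ(x,R)^{−1} ∫_{B(x,R)} |f| dμ. -/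
open MeasureTheory Metric Set ENNReal

open MeasureTheory Metric Set ENNReal in
theorem aux_halving_pow
    {X : Type*} [MetricSpace X] [MeasurableSpace X] [BorelSpace X]
    {μ : Measure X} {lam : X → ℝ → ℝ} {Cl : ℝ}
    (hud : IsUpperDoubling μ lam Cl) (x : X) (s : ℝ) (hs : 0 < s) :
    ∀ n : ℕ, lam x (2 ^ n * s) ≤ Cl ^ n * lam x s := by
  have hCl0 : (0:ℝ) ≤ Cl := (lt_trans one_pos hud.one_lt).le
  intro n
  induction n with
  | zero => simp
  | succ n ih =>
    have h2 : (0:ℝ) < 2 ^ (n+1) * s := by positivity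
    have h := hud.halving x (2 ^ (n+1) * s) h2
    have he : (2:ℝ) ^ (n+1) * s / 2 = 2 ^ n * s := by ring
    rw [he] at h
    calc lam x (2 ^ (n+1) * s) ≤ Cl * lam x (2 ^ n * s) := h
      _ ≤ Cl * (Cl ^ n * lam x s) := mul_le_mul_of_nonneg_left ih hCl0
      _ = Cl ^ (n+1) * lam x s := by ring

open MeasureTheory Metric Set ENNReal in
theorem aux_mlam_ball
    {X : Type*} [MetricSpace X] [MeasurableSpace X] [BorelSpace X]
    (μ : Measure X) (lam : X → ℝ → ℝ) (f : X → ℂ) (x : X) (R : ℝ)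
    (hR : 0 < R) (hl : 0 < lam x R) :
    (∫⁻ y in ball x R, ‖f y‖₊ ∂μ) ≤ Mlam μ lam f x * ENNReal.ofReal (lam x R) := by
  have h : (∫⁻ y in ball x R, ‖f y‖₊ ∂μ) / ENNReal.ofReal (lam x R) ≤ Mlam μ lam f x :=
    le_iSup₂ (f := fun (R : ℝ) (_ : 0 < R) =>
      (∫⁻ y in ball x R, ‖f y‖₊ ∂μ) / ENNReal.ofReal (lam x R)) R hR
  exact (ENNReal.div_le_iff (ENNReal.ofReal_pos.mpr hl).ne' ENNReal.ofReal_ne_top).mp h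

open MeasureTheory Metric Set ENNReal in
set_option maxHeartbeats 2000000 in
/-- Smoothness estimate: the difference of the kernel at two nearby points, integrated
against `f` outside an enlarged ball, is controlled by `‖ω‖_Dini · M_λ f(x)`. -/
theorem kernel_difference_estimate
    {X : Type*} [MetricSpace X] [MeasurableSpace X] [BorelSpace X]
    (μ : Measure X) [IsLocallyFiniteMeasure μ]
    (lam : X → ℝ → ℝ) (Cl : ℝ) (hud : IsUpperDoubling μ lam Cl)
    (ω : ℝ → ℝ) (hω : IsDiniModulus ω)
    (K : X → X → ℂ) (CK : ℝ) (hK : IsCZKernel lam K CK ω) :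
    ∃ C : ℝ, 0 < C ∧
      ∀ (z : X) (r : ℝ), 0 < r →
        ∀ x ∈ ball z (28 * r), ∀ x' ∈ ball z (28 * r),
          ∀ f : X → ℂ, (∀ (c : X) (R : ℝ), IntegrableOn f (ball c R) μ) →
            ENNReal.ofReal ‖∫ y in (ball z (30 * r))ᶜ, (K x y - K x' y) * f y ∂μ‖ ≤
              ENNReal.ofReal (C * diniNorm ω) * Mlam μ lam f x := by
  have hCl1 : (1:ℝ) < Cl := hud.one_lt
  have hCl0 : (0:ℝ) < Cl := lt_trans one_pos hCl1
  set CK' : ℝ := max CK 0 with hCK'def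
  have hCK'0 : 0 ≤ CK' := le_max_right _ _
  set D : ℝ := diniNorm ω with hDdef
  have hDpos : 0 < D := by
    have h0 : 0 < ω ((2:ℝ) ^ (-((0:ℕ):ℤ))) := hω.pos _ (by norm_num)
    have h1 : ω ((2:ℝ) ^ (-((0:ℕ):ℤ))) ≤ D :=
      hω.summable.le_tsum 0 (fun j _ => hω.nonneg _ (by positivity))
    exact lt_of_lt_of_le h0 h1
  set c1 : ℝ := CK' * (Cl ^ 7 + Cl ^ 8) with hc1def
  have hc10 : 0 ≤ c1 := by positivity
  refine ⟨(c1 + Cl * D) / D + 1, ?_, ?_⟩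
  · have h1 : 0 ≤ (c1 + Cl * D) / D := div_nonneg (by nlinarith) hDpos.le
    linarith
  intro z r hr x hx x' hx' f hf
  by_cases hxx : x = x'
  · subst hxx
    simp only [sub_self, zero_mul, integral_zero, norm_zero, ENNReal.ofReal_zero]
    exact zero_le
  -- shifted Dini sum
  set Dsh : ℝ := ∑' j : ℕ, ω ((2:ℝ) ^ (-((j+1 : ℕ):ℤ))) with hDshdef
  have hsumsh : Summable (fun j : ℕ => ω ((2:ℝ) ^ (-((j+1 : ℕ):ℤ)))) := by
    exact hω.summable.comp_injective (add_left_injective 1)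
  have hDshD : Dsh ≤ D := by
    refine Summable.tsum_le_tsum_of_inj (· + 1) (add_left_injective 1)
      (fun c _ => hω.nonneg _ (by positivity)) (fun i => le_rfl) hsumsh hω.summable
  have hDsh0 : 0 ≤ Dsh := tsum_nonneg (fun j => hω.nonneg _ (by positivity))
  set d0 : ℝ := dist x x' with hd0def
  have hd0 : 0 < d0 := dist_pos.mpr hxx
  have hxz : dist x z < 28 * r := mem_ball.mp hx
  have hx'z : dist x' z < 28 * r := mem_ball.mp hx'
  have hd0r : d0 < 56 * r := by
    have h1 : dist x x' ≤ dist x z + dist z x' := dist_triangle x z x'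
    have h2 : dist z x' = dist x' z := dist_comm z x'
    rw [hd0def]; linarith
  set S := ball z (30 * r) with hSdef
  have hyd : ∀ y ∈ Sᶜ, 2 * r < dist x y ∧ 2 * r < dist x' y := by
    intro y hy
    have h1 : 30 * r ≤ dist y z := by
      have := hy
      simp only [hSdef, mem_compl_iff, mem_ball, not_lt] at this
      exact this
    have h2 : dist y z ≤ dist y x + dist x z := dist_triangle y x z
    have h3 : dist y z ≤ dist y x' + dist x' z := dist_triangle y x' z
    have h4 : dist y x = dist x y := dist_comm y x
    have h5 : dist y x' = dist x' y := dist_comm y x'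
    constructor <;> linarith
  have hl2r : 0 < lam x (2 * r) := hud.lam_pos _ _ (by linarith)
  have hl2r' : 0 < lam x' (2 * r) := hud.lam_pos _ _ (by linarith)
  have hl256 : 0 < lam x (256 * r) := hud.lam_pos _ _ (by linarith)
  -- doubling chains
  have h256x : lam x (256 * r) ≤ Cl ^ 7 * lam x (2 * r) := by
    have h := aux_halving_pow hud x (2 * r) (by linarith) 7
    rw [show (2:ℝ) ^ (7:ℕ) * (2 * r) = 256 * r by ring] at h
    exact h
  have h256x' : lam x (256 * r) ≤ Cl ^ 8 * lam x' (2 * r) := by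
    have h1 : lam x (256 * r) ≤ Cl * lam x' (256 * r) :=
      hud.close x x' (256 * r) (by linarith) (by rw [← hd0def]; linarith)
    have h2 := aux_halving_pow hud x' (2 * r) (by linarith) 7
    rw [show (2:ℝ) ^ (7:ℕ) * (2 * r) = 256 * r by ring] at h2
    nlinarith
  -- near / far sets
  set N : Set X := Sᶜ ∩ closedBall x (3 * d0) with hNdef
  set F : Set X := Sᶜ \ closedBall x (3 * d0) with hFdef
  set M : ℝ≥0∞ := Mlam μ lam f x with hMdef
  -- near pointwise bound
  have hnearpt : ∀ y ∈ N, ‖K x y - K x' y‖ ≤ c1 / lam x (256 * r) := by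
    intro y hy
    obtain ⟨h2r, h2r'⟩ := hyd y hy.1
    have hxy : x ≠ y := by
      intro h; rw [h] at h2r; simp at h2r; linarith
    have hx'y : x' ≠ y := by
      intro h; rw [h] at h2r'; simp at h2r'; linarith
    have hldx : 0 < lam x (dist x y) := hud.lam_pos _ _ (by linarith)
    have hldx' : 0 < lam x' (dist x' y) := hud.lam_pos _ _ (by linarith)
    have hA : ‖K x y‖ ≤ CK' * Cl ^ 7 / lam x (256 * r) := by
      have h1 : ‖K x y‖ ≤ CK / lam x (dist x y) := hK.size x y hxy
      have h2 : CK / lam x (dist x y) ≤ CK' / lam x (2 * r) := by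
        apply div_le_div₀ hCK'0 (le_max_left CK 0) hl2r
        exact hud.lam_mono x (2 * r) (dist x y) (by linarith) h2r.le
      have h3 : CK' / lam x (2 * r) ≤ CK' * Cl ^ 7 / lam x (256 * r) := by
        rw [div_le_div_iff₀ hl2r hl256]
        nlinarith [mul_le_mul_of_nonneg_left h256x hCK'0]
      linarith
    have hB : ‖K x' y‖ ≤ CK' * Cl ^ 8 / lam x (256 * r) := by
      have h1 : ‖K x' y‖ ≤ CK / lam x' (dist x' y) := hK.size x' y hx'y
      have h2 : CK / lam x' (dist x' y) ≤ CK' / lam x' (2 * r) := by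
        apply div_le_div₀ hCK'0 (le_max_left CK 0) hl2r'
        exact hud.lam_mono x' (2 * r) (dist x' y) (by linarith) h2r'.le
      have h3 : CK' / lam x' (2 * r) ≤ CK' * Cl ^ 8 / lam x (256 * r) := by
        rw [div_le_div_iff₀ hl2r' hl256]
        nlinarith [mul_le_mul_of_nonneg_left h256x' hCK'0]
      linarith
    calc ‖K x y - K x' y‖ ≤ ‖K x y‖ + ‖K x' y‖ := norm_sub_le _ _
      _ ≤ CK' * Cl ^ 7 / lam x (256 * r) + CK' * Cl ^ 8 / lam x (256 * r) := add_le_add hA hB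
      _ = c1 / lam x (256 * r) := by rw [hc1def]; ring
  have hNmeas : MeasurableSet N :=
    (measurableSet_ball.compl).inter measurableSet_closedBall
  have hnear : ∫⁻ y in N, ‖(K x y - K x' y) * f y‖₊ ∂μ ≤ ENNReal.ofReal c1 * M := by
    calc ∫⁻ y in N, ‖(K x y - K x' y) * f y‖₊ ∂μ
        ≤ ∫⁻ y in N, ENNReal.ofReal (c1 / lam x (256 * r)) * ‖f y‖₊ ∂μ := by
          refine setLIntegral_mono' hNmeas (fun y hy => ?_)
          rw [nnnorm_mul, ENNReal.coe_mul]
          refine mul_le_mul_left ?_ _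
          rw [← enorm_eq_nnnorm, ← ofReal_norm_eq_enorm]
          exact ENNReal.ofReal_le_ofReal (hnearpt y hy)
      _ = ENNReal.ofReal (c1 / lam x (256 * r)) * ∫⁻ y in N, ‖f y‖₊ ∂μ :=
          lintegral_const_mul' _ _ ENNReal.ofReal_ne_top
      _ ≤ ENNReal.ofReal (c1 / lam x (256 * r)) * (M * ENNReal.ofReal (lam x (256 * r))) := by
          refine mul_le_mul_right ?_ _
          refine le_trans (lintegral_mono_set ?_) (aux_mlam_ball μ lam f x (256 * r) (by linarith) hl256)
          intro y hy
          have h1 : dist y x ≤ 3 * d0 := mem_closedBall.mp hy.2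
          have h2 : dist y x < 256 * r := by linarith
          exact mem_ball.mpr h2
      _ = ENNReal.ofReal c1 * M := by
          rw [mul_comm M _, ← mul_assoc, ← ENNReal.ofReal_mul (div_nonneg hc10 hl256.le),
            div_mul_cancel₀ _ hl256.ne']
  -- far part
  set ρ : ℝ := max (2 * r) (3 * d0) with hρdef
  have hρ : 0 < ρ := lt_of_lt_of_le (by linarith : (0:ℝ) < 2 * r) (le_max_left _ _)
  have hρd0 : 2 * d0 ≤ ρ := le_trans (by linarith) (le_max_right _ _)
  set A : ℕ → Set X := fun j => (F ∩ ball x (2 ^ (j+1) * ρ)) \ ball x (2 ^ j * ρ) with hAdef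
  have hFsub : F ⊆ ⋃ j, A j := by
    intro y hy
    have hyS : y ∈ Sᶜ := hy.1
    have h3 : 3 * d0 < dist y x := by
      have := hy.2
      simpa [mem_closedBall, not_le] using this
    have h2 : 2 * r < dist x y := (hyd y hyS).1
    have hdc : dist y x = dist x y := dist_comm y x
    have h1 : ρ ≤ dist x y := by
      apply max_le (by linarith) (by linarith)
    have ht : 1 ≤ dist x y / ρ := (one_le_div hρ).mpr h1
    obtain ⟨n, hn1, hn2⟩ := exists_nat_pow_near ht one_lt_two
    refine mem_iUnion.mpr ⟨n, ⟨⟨hy, ?_⟩, ?_⟩⟩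
    · have : dist x y < 2 ^ (n+1) * ρ := by
        rw [div_lt_iff₀ hρ] at hn2
        linarith
      exact mem_ball.mpr (by rw [hdc]; exact this)
    · intro hmem
      have hlt : dist y x < 2 ^ n * ρ := mem_ball.mp hmem
      rw [le_div_iff₀ hρ] at hn1
      rw [hdc] at hlt
      linarith
  have hAmeas : ∀ j, MeasurableSet (A j) := by
    intro j
    exact (((measurableSet_ball.compl).diff measurableSet_closedBall).inter
      measurableSet_ball).diff measurableSet_ball
  have hfarj : ∀ j : ℕ, ∫⁻ y in A j, ‖(K x y - K x' y) * f y‖₊ ∂μ ≤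
      ENNReal.ofReal (Cl * ω ((2:ℝ) ^ (-((j+1 : ℕ):ℤ)))) * M := by
    intro j
    have hpow : (0:ℝ) < 2 ^ j * ρ := by positivity
    have hlamj : 0 < lam x (2 ^ j * ρ) := hud.lam_pos _ _ hpow
    have hfarpt : ∀ y ∈ A j,
        ‖K x y - K x' y‖ ≤ ω ((2:ℝ) ^ (-((j+1 : ℕ):ℤ))) / lam x (2 ^ j * ρ) := by
      intro y hy
      obtain ⟨⟨hyF, hyb⟩, hynb⟩ := hy
      have hyS : y ∈ Sᶜ := hyF.1
      have h2r : 2 * r < dist x y := (hyd y hyS).1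
      have h3 : 3 * d0 < dist x y := by
        have h := hyF.2
        have hdc : dist y x = dist x y := dist_comm y x
        simp only [mem_closedBall, not_le] at h
        linarith
      have hdlb : 2 ^ j * ρ ≤ dist x y := by
        have := mt mem_ball.mpr hynb
        have hdc : dist y x = dist x y := dist_comm y x
        rw [not_lt] at this
        linarith
      have hxy : x ≠ y := by
        intro h; rw [h] at h2r; simp at h2r; linarith
      have hlt : dist x x' < dist x y / 2 := by rw [← hd0def]; linarith
      have hsm := hK.smooth x x' y hxy hlt
      have h1 : ‖K x y - K x' y‖ ≤ ω (dist x x' / dist x y) / lam x (dist x y) :=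
        le_trans (le_add_of_nonneg_right (norm_nonneg _)) hsm
      have hdpos : 0 < dist x y := by linarith
      have hkey : (2:ℝ) ^ (j+1) * d0 ≤ dist x y := by
        have : (2:ℝ) ^ (j+1) * d0 = 2 ^ j * (2 * d0) := by ring
        rw [this]
        calc (2:ℝ) ^ j * (2 * d0) ≤ 2 ^ j * ρ := by
              apply mul_le_mul_of_nonneg_left hρd0 (by positivity)
          _ ≤ dist x y := hdlb
      have hnum : ω (dist x x' / dist x y) ≤ ω ((2:ℝ) ^ (-((j+1 : ℕ):ℤ))) := by
        have harg : dist x x' / dist x y ≤ (2:ℝ) ^ (-((j+1 : ℕ):ℤ)) := by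
          rw [zpow_neg, zpow_natCast]
          have heq : d0 / ((2:ℝ) ^ (j+1) * d0) = ((2:ℝ) ^ (j+1))⁻¹ := by
            field_simp
          calc dist x x' / dist x y = d0 / dist x y := by rw [hd0def]
            _ ≤ d0 / ((2:ℝ) ^ (j+1) * d0) :=
                div_le_div_of_nonneg_left hd0.le (by positivity) hkey
            _ = ((2:ℝ) ^ (j+1))⁻¹ := heq
        exact hω.mono (mem_Ici.mpr (div_nonneg dist_nonneg hdpos.le))
          (mem_Ici.mpr (by positivity)) harg
      have hden : lam x (2 ^ j * ρ) ≤ lam x (dist x y) :=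
        hud.lam_mono x _ _ hpow hdlb
      calc ‖K x y - K x' y‖ ≤ ω (dist x x' / dist x y) / lam x (dist x y) := h1
        _ ≤ ω ((2:ℝ) ^ (-((j+1 : ℕ):ℤ))) / lam x (2 ^ j * ρ) :=
            div_le_div₀ (hω.nonneg _ (by positivity)) hnum hlamj hden
    have hAball : A j ⊆ ball x (2 ^ (j+1) * ρ) := by
      intro y hy
      exact hy.1.2
    have hl2j : lam x (2 ^ (j+1) * ρ) ≤ Cl * lam x (2 ^ j * ρ) := by
      have h := hud.halving x (2 ^ (j+1) * ρ) (by positivity)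
      have he : (2:ℝ) ^ (j+1) * ρ / 2 = 2 ^ j * ρ := by ring
      rw [he] at h
      exact h
    calc ∫⁻ y in A j, ‖(K x y - K x' y) * f y‖₊ ∂μ
        ≤ ∫⁻ y in A j, ENNReal.ofReal (ω ((2:ℝ) ^ (-((j+1 : ℕ):ℤ))) / lam x (2 ^ j * ρ)) * ‖f y‖₊ ∂μ := by
          refine setLIntegral_mono' (hAmeas j) (fun y hy => ?_)
          rw [nnnorm_mul, ENNReal.coe_mul]
          refine mul_le_mul_left ?_ _
          rw [← enorm_eq_nnnorm, ← ofReal_norm_eq_enorm]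
          exact ENNReal.ofReal_le_ofReal (hfarpt y hy)
      _ = ENNReal.ofReal (ω ((2:ℝ) ^ (-((j+1 : ℕ):ℤ))) / lam x (2 ^ j * ρ)) *
            ∫⁻ y in A j, ‖f y‖₊ ∂μ := lintegral_const_mul' _ _ ENNReal.ofReal_ne_top
      _ ≤ ENNReal.ofReal (ω ((2:ℝ) ^ (-((j+1 : ℕ):ℤ))) / lam x (2 ^ j * ρ)) *
            (M * ENNReal.ofReal (Cl * lam x (2 ^ j * ρ))) := by
          refine mul_le_mul_right ?_ _
          refine le_trans (lintegral_mono_set hAball) ?_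
          refine le_trans (aux_mlam_ball μ lam f x (2 ^ (j+1) * ρ) (by positivity)
            (hud.lam_pos _ _ (by positivity))) ?_
          exact mul_le_mul_right (ENNReal.ofReal_le_ofReal hl2j) _
      _ = ENNReal.ofReal (Cl * ω ((2:ℝ) ^ (-((j+1 : ℕ):ℤ)))) * M := by
          rw [mul_comm M _, ← mul_assoc,
            ← ENNReal.ofReal_mul (div_nonneg (hω.nonneg _ (by positivity)) hlamj.le)]
          congr 2
          field_simp
  have hFmeas : MeasurableSet F :=
    (measurableSet_ball.compl).diff measurableSet_closedBall
  have hfar : ∫⁻ y in F, ‖(K x y - K x' y) * f y‖₊ ∂μ ≤ ENNReal.ofReal (Cl * Dsh) * M := by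
    calc ∫⁻ y in F, ‖(K x y - K x' y) * f y‖₊ ∂μ
        ≤ ∫⁻ y in ⋃ j, A j, ‖(K x y - K x' y) * f y‖₊ ∂μ := lintegral_mono_set hFsub
      _ ≤ ∑' j : ℕ, ∫⁻ y in A j, ‖(K x y - K x' y) * f y‖₊ ∂μ := lintegral_iUnion_le _ _
      _ ≤ ∑' j : ℕ, ENNReal.ofReal (Cl * ω ((2:ℝ) ^ (-((j+1 : ℕ):ℤ)))) * M :=
          ENNReal.tsum_le_tsum hfarj
      _ = (∑' j : ℕ, ENNReal.ofReal (Cl * ω ((2:ℝ) ^ (-((j+1 : ℕ):ℤ))))) * M :=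
          ENNReal.tsum_mul_right
      _ = ENNReal.ofReal (Cl * Dsh) * M := by
          congr 1
          rw [← ENNReal.ofReal_tsum_of_nonneg
            (fun j => mul_nonneg hCl0.le (hω.nonneg _ (by positivity)))
            (hsumsh.mul_left Cl)]
          rw [hDshdef, ← tsum_mul_left]
  -- assemble
  have hsplit : Sᶜ ⊆ N ∪ F := by
    intro y hy
    by_cases hc : y ∈ closedBall x (3 * d0)
    · exact Or.inl ⟨hy, hc⟩
    · exact Or.inr ⟨hy, hc⟩
  calc ENNReal.ofReal ‖∫ y in Sᶜ, (K x y - K x' y) * f y ∂μ‖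
      = (‖∫ y in Sᶜ, (K x y - K x' y) * f y ∂μ‖₊ : ℝ≥0∞) := ofReal_norm_eq_enorm _
    _ ≤ ∫⁻ y in Sᶜ, ‖(K x y - K x' y) * f y‖₊ ∂μ := enorm_integral_le_lintegral_enorm _
    _ ≤ ∫⁻ y in N ∪ F, ‖(K x y - K x' y) * f y‖₊ ∂μ := lintegral_mono_set hsplit
    _ ≤ (∫⁻ y in N, ‖(K x y - K x' y) * f y‖₊ ∂μ) +
          ∫⁻ y in F, ‖(K x y - K x' y) * f y‖₊ ∂μ := lintegral_union_le _ _ _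
    _ ≤ ENNReal.ofReal c1 * M + ENNReal.ofReal (Cl * Dsh) * M := add_le_add hnear hfar
    _ ≤ ENNReal.ofReal (((c1 + Cl * D) / D + 1) * D) * M := by
        rw [← add_mul]
        refine mul_le_mul_left ?_ _
        rw [← ENNReal.ofReal_add hc10 (mul_nonneg hCl0.le hDsh0)]
        apply ENNReal.ofReal_le_ofReal
        have heq : ((c1 + Cl * D) / D + 1) * D = c1 + Cl * D + D := by
          field_simp
        rw [heq]
        nlinarith
end

section
/- Let (X,d,μ) be upper doubling with dominating function λ and constant C_λ, and let K: X×X∖Δ → ℂ satisfy the size bound |K(x,y)| ≤ C_K/λ(x,d(x,y)). Then for all constants 0 < c₁ ≤ c₂ there is a constant C depending only on C_K, C_λ, c₁, c₂ such that for every ball B(z,r), every x ∈ B(z,28r), every ρ with c₁·r ≤ ρ ≤ c₂·r, and every f ∈ L¹_loc(μ): |∫_{d(x,y)>ρ} K(x,y) f(y) dμ(y) − ∫_{X∖B(z,30r)} K(x,y) f(y) dμ(y)| ≤ C·M_λ f(x), where M_λ f(x) := sup_{R>0} λ(x,R)^{−1} ∫_{B(x,R)} |f| dμ (assuming both integrals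 converge absolutely). -/
open MeasureTheory Metric Set ENNReal

open MeasureTheory Metric Set ENNReal in
private lemma lam_le_pow_halving
    {X : Type*} [MetricSpace X] [MeasurableSpace X] [BorelSpace X]
    {μ : Measure X} {lam : X → ℝ → ℝ} {Cl : ℝ} (hud : IsUpperDoubling μ lam Cl)
    (N : ℕ) (x : X) (t : ℝ) (ht : 0 < t) :
    lam x t ≤ Cl ^ N * lam x (t / 2 ^ N) := by
  have hCl : (0:ℝ) < Cl := lt_trans one_pos hud.one_lt
  induction N with
  | zero => simp
  | succ n ih =>
    have h2 : (0:ℝ) < t / 2 ^ n := by positivity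
    calc lam x t ≤ Cl ^ n * lam x (t / 2 ^ n) := ih
      _ ≤ Cl ^ n * (Cl * lam x (t / 2 ^ n / 2)) :=
          mul_le_mul_of_nonneg_left (hud.halving x _ h2) (pow_nonneg hCl.le n)
      _ = Cl ^ (n + 1) * lam x (t / 2 ^ (n + 1)) := by
          rw [pow_succ (2:ℝ), ← div_div]; ring

open MeasureTheory Metric Set ENNReal in
/-- Comparison of the `ρ`-truncation at `x` with the non-sharp truncation adapted to a
ball `B(z,r)` containing `x`: the difference is controlled by `M_λ f(x)`. -/
theorem truncation_comparison
    {X : Type*} [MetricSpace X] [MeasurableSpace X] [BorelSpace X]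
    (μ : Measure X) [IsLocallyFiniteMeasure μ]
    (lam : X → ℝ → ℝ) (Cl : ℝ) (hud : IsUpperDoubling μ lam Cl)
    (K : X → X → ℂ) (CK : ℝ)
    (hK : ∀ x y, x ≠ y → ‖K x y‖ ≤ CK / lam x (dist x y))
    (c₁ c₂ : ℝ) (hc₁ : 0 < c₁) (hc₁₂ : c₁ ≤ c₂) :
    ∃ C : ℝ, 0 < C ∧
      ∀ (z : X) (r : ℝ), 0 < r → ∀ x ∈ ball z (28 * r),
        ∀ ρ : ℝ, c₁ * r ≤ ρ → ρ ≤ c₂ * r →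
          ∀ f : X → ℂ, (∀ (c : X) (R : ℝ), IntegrableOn f (ball c R) μ) →
            IntegrableOn (fun y => K x y * f y) (closedBall x ρ)ᶜ μ →
            IntegrableOn (fun y => K x y * f y) (ball z (30 * r))ᶜ μ →
            ENNReal.ofReal
                ‖(∫ y in (closedBall x ρ)ᶜ, K x y * f y ∂μ) -
                  ∫ y in (ball z (30 * r))ᶜ, K x y * f y ∂μ‖ ≤
              ENNReal.ofReal C * Mlam μ lam f x := by
  have hCl : (0:ℝ) < Cl := lt_trans one_pos hud.one_lt
  set a : ℝ := min c₁ 2 with ha_def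
  set b : ℝ := max (c₂ + 1) 58 with hb_def
  have ha : 0 < a := lt_min hc₁ two_pos
  have hb58 : (58:ℝ) ≤ b := le_max_right _ _
  have hb : 0 < b := by linarith
  obtain ⟨N, hN⟩ := pow_unbounded_of_one_lt (y := (2:ℝ)) (b / a) one_lt_two
  have hba : b ≤ a * 2 ^ N := by
    rw [div_lt_iff₀ ha] at hN; nlinarith
  set CK' : ℝ := max CK 0 with hCK'_def
  have hCK' : 0 ≤ CK' := le_max_right _ _
  have hClN : (0:ℝ) < Cl ^ N := pow_pos hCl N
  refine ⟨2 * CK' * Cl ^ N + 1, by nlinarith, ?_⟩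
  intro z r hr x hx ρ hρ1 hρ2 f hfint hA hB
  have hxz : dist x z < 28 * r := by rwa [mem_ball] at hx
  have har : 0 < a * r := by positivity
  have hbr : 0 < b * r := by positivity
  have hρ0 : 0 < ρ := lt_of_lt_of_le (by positivity) hρ1
  have hlam_ar : 0 < lam x (a * r) := hud.lam_pos _ _ har
  have hlam_br : 0 < lam x (b * r) := hud.lam_pos _ _ hbr
  have hlam_ratio : lam x (b * r) ≤ Cl ^ N * lam x (a * r) := by
    calc lam x (b * r) ≤ Cl ^ N * lam x (b * r / 2 ^ N) := lam_le_pow_halving hud N x _ hbr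
      _ ≤ Cl ^ N * lam x (a * r) := by
          refine mul_le_mul_of_nonneg_left ?_ hClN.le
          refine hud.lam_mono _ _ _ (by positivity) ?_
          rw [div_le_iff₀ (by positivity)]
          nlinarith
  -- key pointwise/integral bound on annular regions
  have key : ∀ S : Set X, MeasurableSet S →
      IntegrableOn (fun y => K x y * f y) S μ →
      (∀ y ∈ S, a * r ≤ dist x y ∧ dist x y < b * r) →
      (∫ y in S, ‖K x y * f y‖ ∂μ) ≤
        (CK' / lam x (a * r)) * ∫ y in ball x (b * r), ‖f y‖ ∂μ := by
    intro S hSm hSint hSsub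
    have hsub : S ⊆ ball x (b * r) := fun y hy => by
      rw [mem_ball, dist_comm]; exact (hSsub y hy).2
    have hint2 : IntegrableOn (fun y => (CK' / lam x (a * r)) * ‖f y‖) (ball x (b * r)) μ :=
      (hfint x (b * r)).norm.const_mul _
    calc (∫ y in S, ‖K x y * f y‖ ∂μ)
        ≤ ∫ y in S, (CK' / lam x (a * r)) * ‖f y‖ ∂μ := by
          refine setIntegral_mono_on hSint.norm (hint2.mono_set hsub) hSm ?_
          intro y hy
          obtain ⟨hy1, hy2⟩ := hSsub y hy
          have hxy : x ≠ y := by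
            intro h; rw [h, dist_self] at hy1; linarith
          rw [norm_mul]
          refine mul_le_mul_of_nonneg_right ?_ (norm_nonneg _)
          calc ‖K x y‖ ≤ CK / lam x (dist x y) := hK x y hxy
            _ ≤ CK' / lam x (a * r) :=
                div_le_div₀ hCK' (le_max_left _ _) hlam_ar (hud.lam_mono _ _ _ har hy1)
      _ ≤ ∫ y in ball x (b * r), (CK' / lam x (a * r)) * ‖f y‖ ∂μ := by
          refine setIntegral_mono_set hint2 ?_ (HasSubset.Subset.eventuallyLE hsub)
          filter_upwards with y
          positivity
      _ = (CK' / lam x (a * r)) * ∫ y in ball x (b * r), ‖f y‖ ∂μ := integral_const_mul _ _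
  set A : Set X := (closedBall x ρ)ᶜ with hA_def
  set B : Set X := (ball z (30 * r))ᶜ with hB_def
  have hAm : MeasurableSet A := measurableSet_closedBall.compl
  have hBm : MeasurableSet B := measurableSet_ball.compl
  have hS1 : ∀ y ∈ A \ B, a * r ≤ dist x y ∧ dist x y < b * r := by
    rintro y ⟨hyA, hyB⟩
    rw [hA_def, mem_compl_iff, mem_closedBall, not_le] at hyA
    rw [hB_def, mem_compl_iff, not_not, mem_ball] at hyB
    have hd : dist x y = dist y x := dist_comm x y
    have htri : dist x y ≤ dist x z + dist z y := dist_triangle x z y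
    have hzy : dist z y = dist y z := dist_comm z y
    have haar : a * r ≤ c₁ * r := mul_le_mul_of_nonneg_right (min_le_left _ _) hr.le
    have hbbr : 58 * r ≤ b * r := mul_le_mul_of_nonneg_right hb58 hr.le
    constructor <;> linarith
  have hS2 : ∀ y ∈ B \ A, a * r ≤ dist x y ∧ dist x y < b * r := by
    rintro y ⟨hyB, hyA⟩
    rw [hB_def, mem_compl_iff, mem_ball, not_lt] at hyB
    rw [hA_def, mem_compl_iff, not_not, mem_closedBall] at hyA
    have hd : dist x y = dist y x := dist_comm x y
    have htri : dist z y ≤ dist z x + dist x y := dist_triangle z x y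
    have hzx : dist z x = dist x z := dist_comm z x
    have hzy : dist z y = dist y z := dist_comm z y
    have haar : a * r ≤ 2 * r := mul_le_mul_of_nonneg_right (min_le_right _ _) hr.le
    have hbbr : (c₂ + 1) * r ≤ b * r := mul_le_mul_of_nonneg_right (le_max_left _ _) hr.le
    constructor <;> nlinarith
  have hsplitA : ((∫ y in A ∩ B, K x y * f y ∂μ) + ∫ y in A \ B, K x y * f y ∂μ) =
      ∫ y in A, K x y * f y ∂μ := integral_inter_add_diff hBm hA
  have hsplitB : ((∫ y in B ∩ A, K x y * f y ∂μ) + ∫ y in B \ A, K x y * f y ∂μ) =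
      ∫ y in B, K x y * f y ∂μ := integral_inter_add_diff hAm hB
  have hdiff : (∫ y in A, K x y * f y ∂μ) - (∫ y in B, K x y * f y ∂μ) =
      (∫ y in A \ B, K x y * f y ∂μ) - ∫ y in B \ A, K x y * f y ∂μ := by
    rw [← hsplitA, ← hsplitB, inter_comm B A]; ring
  have hi1 : IntegrableOn (fun y => K x y * f y) (A \ B) μ := hA.mono_set diff_subset
  have hi2 : IntegrableOn (fun y => K x y * f y) (B \ A) μ := hB.mono_set diff_subset
  have hreal : ‖(∫ y in A, K x y * f y ∂μ) - ∫ y in B, K x y * f y ∂μ‖ ≤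
      (2 * CK' / lam x (a * r)) * ∫ y in ball x (b * r), ‖f y‖ ∂μ := by
    rw [hdiff]
    calc ‖(∫ y in A \ B, K x y * f y ∂μ) - ∫ y in B \ A, K x y * f y ∂μ‖
        ≤ ‖∫ y in A \ B, K x y * f y ∂μ‖ + ‖∫ y in B \ A, K x y * f y ∂μ‖ := norm_sub_le _ _
      _ ≤ (∫ y in A \ B, ‖K x y * f y‖ ∂μ) + ∫ y in B \ A, ‖K x y * f y‖ ∂μ :=
          add_le_add (norm_integral_le_integral_norm _) (norm_integral_le_integral_norm _)
      _ ≤ (CK' / lam x (a * r)) * (∫ y in ball x (b * r), ‖f y‖ ∂μ) +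
            (CK' / lam x (a * r)) * ∫ y in ball x (b * r), ‖f y‖ ∂μ :=
          add_le_add (key _ (hAm.diff hBm) hi1 hS1) (key _ (hBm.diff hAm) hi2 hS2)
      _ = (2 * CK' / lam x (a * r)) * ∫ y in ball x (b * r), ‖f y‖ ∂μ := by ring
  have hIeq : ENNReal.ofReal (∫ y in ball x (b * r), ‖f y‖ ∂μ) =
      ∫⁻ y in ball x (b * r), ‖f y‖₊ ∂μ :=
    ofReal_integral_norm_eq_lintegral_enorm (hfint x (b * r))
  have hM : (∫⁻ y in ball x (b * r), ‖f y‖₊ ∂μ) / ENNReal.ofReal (lam x (b * r)) ≤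
      Mlam μ lam f x := le_iSup_of_le (b * r) (le_iSup_of_le hbr le_rfl)
  have hconst : ENNReal.ofReal (2 * CK' / lam x (a * r)) ≤
      ENNReal.ofReal (2 * CK' * Cl ^ N + 1) / ENNReal.ofReal (lam x (b * r)) := by
    rw [ENNReal.le_div_iff_mul_le (Or.inl (ENNReal.ofReal_pos.mpr hlam_br).ne')
        (Or.inl ENNReal.ofReal_ne_top), ← ENNReal.ofReal_mul (by positivity)]
    apply ENNReal.ofReal_le_ofReal
    rw [div_mul_eq_mul_div, div_le_iff₀ hlam_ar]
    nlinarith [mul_le_mul_of_nonneg_left hlam_ratio (by positivity : (0:ℝ) ≤ 2 * CK')]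
  calc ENNReal.ofReal ‖(∫ y in A, K x y * f y ∂μ) - ∫ y in B, K x y * f y ∂μ‖
      ≤ ENNReal.ofReal ((2 * CK' / lam x (a * r)) * ∫ y in ball x (b * r), ‖f y‖ ∂μ) :=
        ENNReal.ofReal_le_ofReal hreal
    _ = ENNReal.ofReal (2 * CK' / lam x (a * r)) *
          ∫⁻ y in ball x (b * r), ‖f y‖₊ ∂μ := by
        rw [ENNReal.ofReal_mul (by positivity), hIeq]
    _ ≤ (ENNReal.ofReal (2 * CK' * Cl ^ N + 1) / ENNReal.ofReal (lam x (b * r))) *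
          ∫⁻ y in ball x (b * r), ‖f y‖₊ ∂μ :=
        mul_le_mul_left hconst _
    _ = ENNReal.ofReal (2 * CK' * Cl ^ N + 1) *
          ((∫⁻ y in ball x (b * r), ‖f y‖₊ ∂μ) / ENNReal.ofReal (lam x (b * r))) := by
        rw [div_eq_mul_inv, ENNReal.div_eq_inv_mul]; ring
    _ ≤ ENNReal.ofReal (2 * CK' * Cl ^ N + 1) * Mlam μ lam f x := mul_le_mul_right hM _
end

section
/- Let (X,d,μ) be upper doubling with dominating function λ and constant C_λ, K a Calderón–Zygmund kernel on X with constant C_K and Dini modulus ω, and D a David–Mattila lattice with parameters C_0, A_0. For a cell Q₀ ∈ D define the localized grand maximal truncated operator N_{Q₀}f(x) := 1_{Q₀}(x)·sup over cells P ∈ D with x ∈ P ⊂ Q₀ of sup_{y∈P} |∫_{X∖30B(P)} K(y,z) f(z) dμ(z)|, and T^♯f(x) := sup_{ε>0} |∫_{d(x,y)>ε} K(x,y) f(y) dμ(y)|. Then there is a constant C depending only on C_λ, C_0, A_0, and absolute constants, such that for every Q₀ ∈ D and every integrable f supported on 30B(Q₀), one has the pointwise bound |N_{Q₀}f(x) −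 T^♯f(x)| ≤ C·(‖ω‖_Dini + C_K)·M_λ f(x) for all x ∈ Q₀, where M_λ f(x) := sup_{R>0} λ(x,R)^{−1} ∫_{B(x,R)} |f| dμ. -/
open MeasureTheory Metric Set ENNReal

section Helpers
open MeasureTheory Metric Set ENNReal
variable {X : Type*} [MetricSpace X] [MeasurableSpace X] [BorelSpace X]
variable {μ : Measure X} {lam : X → ℝ → ℝ} {Cl : ℝ} {ω : ℝ → ℝ} {K : X → X → ℂ} {CK : ℝ}

lemma lam_ratio (hud : IsUpperDoubling μ lam Cl) :
    ∀ (n : ℕ) (x : X) (a b : ℝ), 0 < a → a ≤ b → b ≤ 2 ^ n * a → lam x b ≤ Cl ^ n * lam x a := by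
  have hCl1 : (1:ℝ) ≤ Cl := hud.one_lt.le
  intro n
  induction n with
  | zero => intro x a b ha hab hb; simp only [pow_zero, one_mul] at hb ⊢
            have : a = b := le_antisymm hab hb
            rw [this]
  | succ n ih =>
    intro x a b ha hab hb
    by_cases h : b ≤ 2 ^ n * a
    · have h1 := ih x a b ha hab h
      have h2 : (Cl:ℝ) ^ n ≤ Cl ^ (n+1) := pow_le_pow_right₀ hCl1 (Nat.le_succ n)
      have h3 : 0 ≤ lam x a := (hud.lam_pos x a ha).le
      nlinarith [mul_le_mul_of_nonneg_right h2 h3]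
    · push_neg at h
      have hpn : (1:ℝ) ≤ 2 ^ n := one_le_pow₀ one_le_two
      have hb2 : 0 < b := lt_trans ha (lt_of_le_of_lt (by nlinarith) h)
      have hhalf := hud.halving x b hb2
      have hb2' : b / 2 ≤ 2 ^ n * a := by
        rw [div_le_iff₀ (zero_lt_two)]
        nlinarith [pow_succ (2:ℝ) n]
      have key : lam x (b/2) ≤ Cl ^ n * lam x a := by
        by_cases hba : b / 2 ≤ a
        · have := hud.lam_mono x (b/2) a (by positivity) hba
          have h3 : 0 < lam x a := hud.lam_pos x a ha
          nlinarith [one_le_pow₀ hCl1 (n := n)]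
        · push_neg at hba
          exact ih x a (b/2) ha hba.le hb2'
      calc lam x b ≤ Cl * lam x (b/2) := hhalf
        _ ≤ Cl * (Cl ^ n * lam x a) := by
            have hCl0 : (0:ℝ) < Cl := lt_of_lt_of_le one_pos hCl1
            nlinarith
        _ = Cl ^ (n+1) * lam x a := by ring

lemma lintegral_ball_le_Mlam (hud : IsUpperDoubling μ lam Cl) (f : X → ℂ) (x : X) (R : ℝ)
    (hR : 0 < R) :
    ∫⁻ z in ball x R, ‖f z‖₊ ∂μ ≤ ENNReal.ofReal (lam x R) * Mlam μ lam f x := by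
  have h0 : ENNReal.ofReal (lam x R) ≠ 0 := by
    simp only [ne_eq, ENNReal.ofReal_eq_zero, not_le]
    exact hud.lam_pos x R hR
  have hle : (∫⁻ z in ball x R, ‖f z‖₊ ∂μ) / ENNReal.ofReal (lam x R) ≤ Mlam μ lam f x :=
    le_iSup₂ (f := fun (R : ℝ) (_ : 0 < R) =>
      (∫⁻ z in ball x R, ‖f z‖₊ ∂μ) / ENNReal.ofReal (lam x R)) R hR
  rw [mul_comm]
  exact (ENNReal.div_le_iff h0 ofReal_ne_top).mp hle

/-- Size bound on an "annulus-type" set. -/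
lemma annulus_lintegral_le (hud : IsUpperDoubling μ lam Cl)
    (hK : IsCZKernel lam K CK ω) (hCK : 0 ≤ CK)
    (f : X → ℂ) (x y : X) (a R : ℝ) (n : ℕ)
    (ha : 0 < a) (haR : a ≤ R) (hxy : dist x y ≤ R) (hRn : R ≤ 2 ^ n * a)
    (S : Set X) (hS : MeasurableSet S)
    (hS1 : ∀ z ∈ S, a ≤ dist y z) (hS2 : S ⊆ ball x R) :
    ∫⁻ z in S, ‖K y z * f z‖₊ ∂μ ≤ ENNReal.ofReal (CK * Cl ^ (n+1)) * Mlam μ lam f x := by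
  have hlay : 0 < lam y a := hud.lam_pos y a ha
  have hpt : ∀ z ∈ S, (‖K y z * f z‖₊ : ℝ≥0∞) ≤ ENNReal.ofReal (CK / lam y a) * ‖f z‖₊ := by
    intro z hz
    have hd : a ≤ dist y z := hS1 z hz
    have hyz : y ≠ z := by
      intro h; rw [h] at hd; simp at hd; linarith
    have h1 : ‖K y z‖ ≤ CK / lam y (dist y z) := hK.size y z hyz
    have h2 : CK / lam y (dist y z) ≤ CK / lam y a :=
      div_le_div_of_nonneg_left hCK hlay (hud.lam_mono y a (dist y z) ha hd)
    calc (‖K y z * f z‖₊ : ℝ≥0∞) = (‖K y z‖₊ : ℝ≥0∞) * ‖f z‖₊ := by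
          rw [← ENNReal.coe_mul, nnnorm_mul]
      _ ≤ ENNReal.ofReal (CK / lam y a) * ‖f z‖₊ := by
          apply _root_.mul_le_mul_left
          rw [← ENNReal.ofReal_coe_nnreal, coe_nnnorm]
          exact ENNReal.ofReal_le_ofReal (h1.trans h2)
  calc ∫⁻ z in S, ‖K y z * f z‖₊ ∂μ
      ≤ ∫⁻ z in S, ENNReal.ofReal (CK / lam y a) * ‖f z‖₊ ∂μ := setLIntegral_mono' hS hpt
    _ = ENNReal.ofReal (CK / lam y a) * ∫⁻ z in S, ‖f z‖₊ ∂μ :=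
        lintegral_const_mul' _ _ ofReal_ne_top
    _ ≤ ENNReal.ofReal (CK / lam y a) * ∫⁻ z in ball x R, ‖f z‖₊ ∂μ :=
        _root_.mul_le_mul_right (lintegral_mono_set hS2) _
    _ ≤ ENNReal.ofReal (CK / lam y a) * (ENNReal.ofReal (lam x R) * Mlam μ lam f x) :=
        _root_.mul_le_mul_right (lintegral_ball_le_Mlam hud f x R (lt_of_lt_of_le ha haR)) _
    _ = ENNReal.ofReal (CK / lam y a) * ENNReal.ofReal (lam x R) * Mlam μ lam f x := by
        rw [mul_assoc]
    _ ≤ ENNReal.ofReal (CK * Cl ^ (n+1)) * Mlam μ lam f x := by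
        apply _root_.mul_le_mul_left
        rw [← ENNReal.ofReal_mul (by positivity)]
        apply ENNReal.ofReal_le_ofReal
        have hR0 : 0 < R := lt_of_lt_of_le ha haR
        have h1 : lam x R ≤ Cl * lam y R := hud.close x y R hR0 hxy
        have h2 : lam y R ≤ Cl ^ n * lam y a := lam_ratio hud n y a R ha haR hRn
        have hCl0 : (0:ℝ) < Cl := lt_trans one_pos hud.one_lt
        have h3 : lam x R ≤ Cl ^ (n+1) * lam y a := by
          have hpos : 0 < lam y R := hud.lam_pos y R hR0
          calc lam x R ≤ Cl * lam y R := h1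
            _ ≤ Cl * (Cl ^ n * lam y a) := by nlinarith
            _ = Cl ^ (n+1) * lam y a := by ring
        rw [div_mul_eq_mul_div, div_le_iff₀ hlay]
        nlinarith
end Helpers

section Helpers2
open MeasureTheory Metric Set ENNReal
set_option linter.unusedSectionVars false
variable {X : Type*} [MetricSpace X] [MeasurableSpace X] [BorelSpace X]
variable {μ : Measure X} {lam : X → ℝ → ℝ} {Cl : ℝ} {ω : ℝ → ℝ} {K : X → X → ℂ} {CK : ℝ}

lemma diniNorm_nonneg (hω : IsDiniModulus ω) : 0 ≤ diniNorm ω :=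
  tsum_nonneg (fun j => hω.nonneg _ (by positivity))

/-- Dini tail estimate for the difference of two kernel slices. -/
lemma smooth_tail_lintegral_le (hud : IsUpperDoubling μ lam Cl)
    (hω : IsDiniModulus ω) (hK : IsCZKernel lam K CK ω)
    (f : X → ℂ) (x y : X) (ρ : ℝ) (hρ : 0 < ρ) (hxy : dist x y ≤ ρ) :
    ∫⁻ z in (ball x (4*ρ))ᶜ, ‖(K x z - K y z) * f z‖₊ ∂μ
      ≤ ENNReal.ofReal (Cl * diniNorm ω) * Mlam μ lam f x := by
  set A : ℕ → Set X := fun j => (ball x (4*ρ*2^j))ᶜ ∩ ball x (4*ρ*2^(j+1)) with hA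
  have hcover : (ball x (4*ρ))ᶜ ⊆ ⋃ j, A j := by
    intro z hz
    have hd : 4*ρ ≤ dist z x := by
      simpa [mem_ball, not_lt] using hz
    have hex : ∃ j : ℕ, dist z x < 4*ρ*2^(j+1) := by
      obtain ⟨j, hj⟩ := pow_unbounded_of_one_lt (dist z x / (4*ρ)) (one_lt_two (α := ℝ))
      rw [div_lt_iff₀ (by positivity)] at hj
      refine ⟨j, ?_⟩
      have h2 : (2:ℝ)^j ≤ 2^(j+1) := by
        rw [pow_succ]; nlinarith [pow_pos (zero_lt_two (α := ℝ)) j]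
      nlinarith [pow_pos (zero_lt_two (α := ℝ)) j]
    classical
    set j := Nat.find hex with hjdef
    have hj : dist z x < 4*ρ*2^(j+1) := Nat.find_spec hex
    refine mem_iUnion.2 ⟨j, ?_, by simpa [mem_ball] using hj⟩
    simp only [mem_compl_iff, mem_ball, not_lt]
    match hjj : j, hjdef with
    | 0, _ => simpa using hd
    | (m+1), hm =>
      have hmin : ¬ (dist z x < 4*ρ*2^(m+1)) := by
        rw [hjdef] at hjj
        exact Nat.find_min hex (by omega)
      push_neg at hmin
      exact hmin
  have hAj : ∀ j : ℕ, ∫⁻ z in A j, ‖(K x z - K y z) * f z‖₊ ∂μ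
      ≤ ENNReal.ofReal (Cl * ω ((2:ℝ)^(-(j:ℤ)))) * Mlam μ lam f x := by
    intro j
    have hrj : (0:ℝ) < 4*ρ*2^j := by positivity
    have hωj0 : 0 ≤ ω ((2:ℝ)^(-(j:ℤ))) := hω.nonneg _ (by positivity)
    have hlamj : 0 < lam x (4*ρ*2^j) := hud.lam_pos x _ hrj
    have hmeas : MeasurableSet (A j) := (measurableSet_ball.compl).inter measurableSet_ball
    have hpt : ∀ z ∈ A j, (‖(K x z - K y z) * f z‖₊ : ℝ≥0∞)
        ≤ ENNReal.ofReal (ω ((2:ℝ)^(-(j:ℤ))) / lam x (4*ρ*2^j)) * ‖f z‖₊ := by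
      intro z hz
      obtain ⟨hz1, hz2⟩ := hz
      have hd1 : 4*ρ*2^j ≤ dist z x := by simpa [mem_ball, not_lt] using hz1
      have hd1' : 4*ρ*2^j ≤ dist x z := by rwa [dist_comm]
      have hdpos : 0 < dist x z := lt_of_lt_of_le hrj hd1'
      have hxz : x ≠ z := by intro h; rw [h] at hdpos; simp at hdpos
      have h2j : (1:ℝ) ≤ 2^j := one_le_pow₀ one_le_two
      have hsm : dist x y < dist x z / 2 := by
        have : dist x y ≤ ρ := hxy
        nlinarith
      have hb := hK.smooth x y z hxz hsm
      have hKb : ‖K x z - K y z‖ ≤ ω (dist x y / dist x z) / lam x (dist x z) := by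
        have h0 : 0 ≤ ‖K z x - K z y‖ := norm_nonneg _
        linarith
      have hmono : ω (dist x y / dist x z) ≤ ω ((2:ℝ)^(-(j:ℤ))) := by
        have harg : dist x y / dist x z ≤ (2:ℝ)^(-(j:ℤ)) := by
          rw [zpow_neg, zpow_natCast, div_le_iff₀ hdpos, inv_mul_eq_div,
            le_div_iff₀ (pow_pos (zero_lt_two) j)]
          nlinarith
        exact hω.mono (Set.mem_Ici.mpr (by positivity)) (Set.mem_Ici.mpr (by positivity)) harg
      have hlam : lam x (4*ρ*2^j) ≤ lam x (dist x z) := hud.lam_mono x _ _ hrj hd1'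
      have hfinal : ‖K x z - K y z‖ ≤ ω ((2:ℝ)^(-(j:ℤ))) / lam x (4*ρ*2^j) :=
        hKb.trans (div_le_div₀ (hωj0) hmono hlamj hlam)
      calc (‖(K x z - K y z) * f z‖₊ : ℝ≥0∞) = (‖K x z - K y z‖₊ : ℝ≥0∞) * ‖f z‖₊ := by
            rw [← ENNReal.coe_mul, nnnorm_mul]
        _ ≤ ENNReal.ofReal (ω ((2:ℝ)^(-(j:ℤ))) / lam x (4*ρ*2^j)) * ‖f z‖₊ := by
            apply _root_.mul_le_mul_left
            rw [← ENNReal.ofReal_coe_nnreal, coe_nnnorm]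
            exact ENNReal.ofReal_le_ofReal hfinal
    calc ∫⁻ z in A j, ‖(K x z - K y z) * f z‖₊ ∂μ
        ≤ ∫⁻ z in A j, ENNReal.ofReal (ω ((2:ℝ)^(-(j:ℤ))) / lam x (4*ρ*2^j)) * ‖f z‖₊ ∂μ :=
          setLIntegral_mono' hmeas hpt
      _ = ENNReal.ofReal (ω ((2:ℝ)^(-(j:ℤ))) / lam x (4*ρ*2^j)) * ∫⁻ z in A j, ‖f z‖₊ ∂μ :=
          lintegral_const_mul' _ _ ofReal_ne_top
      _ ≤ ENNReal.ofReal (ω ((2:ℝ)^(-(j:ℤ))) / lam x (4*ρ*2^j)) *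
            ∫⁻ z in ball x (4*ρ*2^(j+1)), ‖f z‖₊ ∂μ :=
          _root_.mul_le_mul_right (lintegral_mono_set (inter_subset_right)) _
      _ ≤ ENNReal.ofReal (ω ((2:ℝ)^(-(j:ℤ))) / lam x (4*ρ*2^j)) *
            (ENNReal.ofReal (lam x (4*ρ*2^(j+1))) * Mlam μ lam f x) :=
          _root_.mul_le_mul_right (lintegral_ball_le_Mlam hud f x _ (by positivity)) _
      _ ≤ ENNReal.ofReal (Cl * ω ((2:ℝ)^(-(j:ℤ)))) * Mlam μ lam f x := by
          rw [← mul_assoc]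
          apply _root_.mul_le_mul_left
          rw [← ENNReal.ofReal_mul (by positivity)]
          apply ENNReal.ofReal_le_ofReal
          have hhalf := hud.halving x (4*ρ*2^(j+1)) (by positivity)
          have heq : (4*ρ*2^(j+1))/2 = 4*ρ*2^j := by rw [pow_succ]; ring
          rw [heq] at hhalf
          rw [div_mul_eq_mul_div, div_le_iff₀ hlamj]
          nlinarith
  calc ∫⁻ z in (ball x (4*ρ))ᶜ, ‖(K x z - K y z) * f z‖₊ ∂μ
      ≤ ∫⁻ z in ⋃ j, A j, ‖(K x z - K y z) * f z‖₊ ∂μ := lintegral_mono_set hcover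
    _ ≤ ∑' (j : ℕ), ∫⁻ z in A j, ‖(K x z - K y z) * f z‖₊ ∂μ := lintegral_iUnion_le _ _
    _ ≤ ∑' (j : ℕ), ENNReal.ofReal (Cl * ω ((2:ℝ)^(-(j:ℤ)))) * Mlam μ lam f x :=
        ENNReal.tsum_le_tsum hAj
    _ = (∑' (j : ℕ), ENNReal.ofReal (Cl * ω ((2:ℝ)^(-(j:ℤ))))) * Mlam μ lam f x :=
        ENNReal.tsum_mul_right
    _ = ENNReal.ofReal (Cl * diniNorm ω) * Mlam μ lam f x := by
        congr 1
        have hCl0 : (0:ℝ) ≤ Cl := le_of_lt (lt_trans one_pos hud.one_lt)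
        rw [← ENNReal.ofReal_tsum_of_nonneg (fun j => by
              exact mul_nonneg hCl0 (hω.nonneg _ (by positivity)))
            (hω.summable.mul_left Cl)]
        rw [diniNorm, tsum_mul_left]
end Helpers2

section Helpers3
open MeasureTheory Metric Set ENNReal
set_option linter.unusedSectionVars false
variable {X : Type*} [MetricSpace X] [MeasurableSpace X] [BorelSpace X]
variable {μ : Measure X} {lam : X → ℝ → ℝ} {Cl : ℝ} {ω : ℝ → ℝ} {K : X → X → ℂ} {CK : ℝ}

lemma omega_small (hω : IsDiniModulus ω) (ε : ℝ) (hε : 0 < ε) :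
    ∃ j : ℕ, ω ((2:ℝ)^(-(j:ℤ))) < ε := by
  have h := hω.summable.tendsto_atTop_zero
  have h2 := (Metric.tendsto_atTop.mp h) ε hε
  obtain ⟨N, hN⟩ := h2
  refine ⟨N, ?_⟩
  have := hN N le_rfl
  rw [Real.dist_eq, sub_zero, abs_of_nonneg (hω.nonneg _ (by positivity))] at this
  exact this

lemma kernel_continuousOn (hud : IsUpperDoubling μ lam Cl) (hω : IsDiniModulus ω)
    (hK : IsCZKernel lam K CK ω) (y : X) :
    ContinuousOn (fun z => K y z) {y}ᶜ := by
  apply continuousOn_of_forall_continuousAt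
  intro z₀ hz₀
  have hz₀y : z₀ ≠ y := by simpa [mem_compl_iff] using hz₀
  have hd0 : 0 < dist z₀ y := dist_pos.mpr hz₀y
  have hlam0 : 0 < lam z₀ (dist z₀ y) := hud.lam_pos z₀ _ hd0
  rw [Metric.continuousAt_iff]
  intro ε hε
  obtain ⟨j, hj⟩ := omega_small hω (ε * lam z₀ (dist z₀ y)) (by positivity)
  refine ⟨min (dist z₀ y / 2) (dist z₀ y * (2:ℝ)^(-(j:ℤ))), by positivity, ?_⟩
  intro z hz
  have hz1 : dist z z₀ < dist z₀ y / 2 := lt_of_lt_of_le hz (min_le_left _ _)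
  have hz2 : dist z z₀ < dist z₀ y * (2:ℝ)^(-(j:ℤ)) := lt_of_lt_of_le hz (min_le_right _ _)
  have hsm := hK.smooth z₀ z y hz₀y (by rw [dist_comm z₀ z]; exact hz1)
  have hKb : ‖K y z₀ - K y z‖ ≤ ω (dist z₀ z / dist z₀ y) / lam z₀ (dist z₀ y) := by
    have h0 : 0 ≤ ‖K z₀ y - K z y‖ := norm_nonneg _
    linarith
  have hmono : ω (dist z₀ z / dist z₀ y) ≤ ω ((2:ℝ)^(-(j:ℤ))) := by
    have harg : dist z₀ z / dist z₀ y ≤ (2:ℝ)^(-(j:ℤ)) := by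
      rw [div_le_iff₀ hd0, dist_comm z₀ z]
      calc dist z z₀ ≤ dist z₀ y * (2:ℝ)^(-(j:ℤ)) := hz2.le
        _ = (2:ℝ)^(-(j:ℤ)) * dist z₀ y := by ring
    exact hω.mono (Set.mem_Ici.mpr (by positivity)) (Set.mem_Ici.mpr (by positivity)) harg
  have : ‖K y z₀ - K y z‖ < ε := by
    calc ‖K y z₀ - K y z‖ ≤ ω (dist z₀ z / dist z₀ y) / lam z₀ (dist z₀ y) := hKb
      _ < ε := by rw [div_lt_iff₀ hlam0]; nlinarith
  rw [dist_eq_norm, norm_sub_rev]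
  exact this

lemma integrableOn_kernel_mul (hud : IsUpperDoubling μ lam Cl) (hω : IsDiniModulus ω)
    (hK : IsCZKernel lam K CK ω) (hCK : 0 ≤ CK)
    {f : X → ℂ} (hf : Integrable f μ) (y : X) (a : ℝ) (ha : 0 < a) :
    IntegrableOn (fun z => K y z * f z) (ball y a)ᶜ μ := by
  set S : Set X := (ball y a)ᶜ with hSdef
  have hS : MeasurableSet S := measurableSet_ball.compl
  have hSsub : S ⊆ {y}ᶜ := by
    intro z hz
    have hz' : z ∉ ball y a := hz
    rw [mem_ball, not_lt] at hz'
    simp only [mem_compl_iff, mem_singleton_iff]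
    intro h; rw [h] at hz'; simp at hz'; linarith
  have hKm : AEStronglyMeasurable (fun z => K y z) (μ.restrict S) := by
    have hcont : ContinuousOn (fun z => K y z) S :=
      (kernel_continuousOn hud hω hK y).mono hSsub
    exact hcont.aestronglyMeasurable hS
  have hfm : AEStronglyMeasurable f (μ.restrict S) := hf.aestronglyMeasurable.restrict
  have hlay : 0 < lam y a := hud.lam_pos y a ha
  have hbound : ∀ z ∈ S, ‖K y z * f z‖ ≤ CK / lam y a * ‖f z‖ := by
    intro z hz
    have hz' : z ∉ ball y a := hz
    rw [mem_ball, not_lt] at hz'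
    have hd : a ≤ dist y z := by rwa [dist_comm]
    have hyz : y ≠ z := by intro h; rw [h] at hd; simp at hd; linarith
    rw [norm_mul]
    apply mul_le_mul_of_nonneg_right _ (norm_nonneg _)
    exact (hK.size y z hyz).trans
      (div_le_div_of_nonneg_left hCK hlay (hud.lam_mono y a _ ha hd))
  have hg : Integrable (fun z => CK / lam y a * ‖f z‖) (μ.restrict S) :=
    (hf.norm.const_mul _).restrict
  apply Integrable.mono' hg (hKm.mul hfm)
  rw [ae_restrict_iff' hS]
  exact ae_of_all _ hbound
end Helpers3
set_option maxHeartbeats 1000000 in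
open MeasureTheory Metric Set ENNReal in
/-- Pointwise comparison of the localized grand maximal truncated operator `N_{Q₀}` with
the maximal truncation `T^♯`: `|N_{Q₀}f − T^♯f| ≤ C(‖ω‖_Dini + C_K) M_λ f` on `Q₀`
(stated as a two-sided inequality since both quantities are `ℝ≥0∞`-valued). -/
theorem grandMax_compare_Tsharp
    {X : Type*} [MetricSpace X] [MeasurableSpace X] [BorelSpace X]
    (μ : Measure X) [IsLocallyFiniteMeasure μ]
    (lam : X → ℝ → ℝ) (Cl : ℝ) (hud : IsUpperDoubling μ lam Cl)
    (ω : ℝ → ℝ) (hω : IsDiniModulus ω)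
    (K : X → X → ℂ) (CK : ℝ) (hK : IsCZKernel lam K CK ω)
    (C0 A0 : ℝ) (hC0 : 1 < C0) (hA0 : 5000 * C0 < A0)
    (D : DavidMattila μ C0 A0) :
    ∃ C : ℝ, 0 < C ∧
      ∀ (k₀ : ℕ), ∀ Q₀ ∈ D.cells k₀,
        ∀ f : X → ℂ, Integrable f μ →
          Function.support f ⊆ ball (D.center k₀ Q₀) (30 * D.radius k₀ Q₀) →
          ∀ x ∈ Q₀,
            grandMax μ D K Q₀ f x ≤
                Tsharp μ K f x +
                  ENNReal.ofReal (C * (diniNorm ω + CK)) * Mlam μ lam f x ∧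
            Tsharp μ K f x ≤
                grandMax μ D K Q₀ f x +
                  ENNReal.ofReal (C * (diniNorm ω + CK)) * Mlam μ lam f x := by
  classical
  have hCl1 : (1:ℝ) < Cl := hud.one_lt
  have hCl0 : (0:ℝ) < Cl := lt_trans one_pos hCl1
  have hA0pos : (0:ℝ) < A0 := by nlinarith
  have hA0gt1 : (1:ℝ) < A0 := by nlinarith
  obtain ⟨n₁, hn₁⟩ := pow_unbounded_of_one_lt (29*C0) (one_lt_two (α := ℝ))
  obtain ⟨n₂, hn₂⟩ := pow_unbounded_of_one_lt (29*C0*A0) (one_lt_two (α := ℝ))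
  by_cases hsing : ∀ a b : X, a = b
  · -- degenerate case : X has at most one point
    refine ⟨1, one_pos, ?_⟩
    intro k₀ Q₀ hQ₀ f hf hsupp x hx
    have hT0 : Tsharp μ K f x = 0 := by
      rw [Tsharp]
      refine le_antisymm (iSup_le fun ε => iSup_le fun hε => ?_) (zero_le)
      have hempty : (closedBall x ε)ᶜ = (∅ : Set X) := by
        rw [compl_empty_iff, eq_univ_iff_forall]
        intro w
        rw [mem_closedBall, show w = x from hsing w x, dist_self]
        exact hε.le
      rw [hempty]
      simp
    have hN0 : grandMax μ D K Q₀ f x = 0 := by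
      rw [grandMax, Set.indicator_of_mem hx]
      refine le_antisymm (iSup_le fun k => iSup_le fun P => iSup_le fun hP =>
        iSup_le fun hxP => iSup_le fun hPQ => iSup_le fun y => iSup_le fun hyP => ?_)
        (zero_le)
      have rpos : (0:ℝ) < D.radius k P :=
        lt_of_lt_of_le (zpow_pos hA0pos _) (D.radius_lb k P hP)
      have hempty : (ball (D.center k P) (30 * D.radius k P))ᶜ = (∅ : Set X) := by
        rw [compl_empty_iff, eq_univ_iff_forall]
        intro w
        rw [mem_ball, show w = D.center k P from hsing _ _, dist_self]
        positivity
      rw [hempty]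
      simp
    rw [hT0, hN0]
    exact ⟨zero_le, zero_le⟩
  · push_neg at hsing
    obtain ⟨p₀, q₀, hpq⟩ := hsing
    have hCK : 0 ≤ CK := by
      have hd : 0 < dist p₀ q₀ := dist_pos.mpr hpq
      have h1 := hK.size p₀ q₀ hpq
      have h2 : (0:ℝ) ≤ ‖K p₀ q₀‖ := norm_nonneg _
      have h3 : 0 < lam p₀ (dist p₀ q₀) := hud.lam_pos _ _ hd
      rcases div_nonneg_iff.mp (le_trans h2 h1) with ⟨h, _⟩ | ⟨_, h⟩
      · exact h
      · linarith
    have hdini : 0 ≤ diniNorm ω := diniNorm_nonneg hω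
    refine ⟨4 * Cl ^ (n₁ + n₂ + 10), by positivity, ?_⟩
    intro k₀ Q₀ hQ₀ f hf hsupp x hx
    set M := Mlam μ lam f x with hM
    set E := ENNReal.ofReal (4 * Cl ^ (n₁ + n₂ + 10) * (diniNorm ω + CK)) * M with hE
    have hEbound : ∀ c : ℝ, c ≤ 4 * Cl ^ (n₁ + n₂ + 10) * (diniNorm ω + CK) →
        ENNReal.ofReal c * M ≤ E := fun c hc =>
      _root_.mul_le_mul_left (ENNReal.ofReal_le_ofReal hc) M
    have hpowle : ∀ m : ℕ, m ≤ n₁ + n₂ + 10 → Cl ^ m ≤ Cl ^ (n₁ + n₂ + 10) :=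
      fun m hm => pow_le_pow_right₀ hCl1.le hm
    have haddM : ∀ a b : ℝ, 0 ≤ a → 0 ≤ b →
        ENNReal.ofReal a * M + ENNReal.ofReal b * M = ENNReal.ofReal (a + b) * M := by
      intro a b ha hb
      rw [ENNReal.ofReal_add ha hb, add_mul]
    have hnormle : ∀ (S : Set X) (g : X → ℂ),
        ENNReal.ofReal ‖∫ w in S, g w ∂μ‖ ≤ ∫⁻ w in S, ‖g w‖₊ ∂μ := by
      intro S g
      rw [ofReal_norm_eq_enorm]
      exact enorm_integral_le_lintegral_enorm _
    have hxW : x ∈ msupport μ := ((D.subset_ball k₀ Q₀ hQ₀) hx).1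
    have hr₀pos : 0 < D.radius k₀ Q₀ :=
      lt_of_lt_of_le (zpow_pos hA0pos _) (D.radius_lb k₀ Q₀ hQ₀)
    have hxz₀ : dist x (D.center k₀ Q₀) < 28 * D.radius k₀ Q₀ := by
      have h := ((D.subset_ball k₀ Q₀ hQ₀) hx).2
      rwa [mem_ball] at h
    have hf0 : ∀ w, w ∉ ball (D.center k₀ Q₀) (30 * D.radius k₀ Q₀) → f w = 0 := by
      intro w hw
      by_contra hc
      exact hw (hsupp hc)
    constructor
    · -- Direction 1 : grandMax ≤ Tsharp + E
      rw [grandMax, Set.indicator_of_mem hx]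
      refine iSup_le fun k => iSup_le fun P => iSup_le fun hP => iSup_le fun hxP =>
        iSup_le fun hPQ => iSup_le fun y => iSup_le fun hyP => ?_
      have hrpos : 0 < D.radius k P :=
        lt_of_lt_of_le (zpow_pos hA0pos _) (D.radius_lb k P hP)
      set r := D.radius k P with hrdef
      set z := D.center k P with hzdef
      have hxz : dist x z < 28 * r := by
        have h := ((D.subset_ball k P hP) hxP).2
        rwa [mem_ball] at h
      have hyz : dist y z < 28 * r := by
        have h := ((D.subset_ball k P hP) hyP).2
        rwa [mem_ball] at h
      have hxy : dist x y ≤ 56 * r := by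
        have h1 : dist x y ≤ dist x z + dist y z := by
          rw [dist_comm y z]
          exact dist_triangle x z y
        linarith
      set S := (ball z (30 * r))ᶜ with hSdef
      set T := (closedBall x (60 * r))ᶜ with hTdef
      have hSmeas : MeasurableSet S := measurableSet_ball.compl
      have hTmeas : MeasurableSet T := measurableSet_closedBall.compl
      have hSx : ∀ w ∈ S, 2 * r ≤ dist x w := by
        intro w hw
        have hw' : ¬ dist w z < 30 * r := hw
        push_neg at hw'
        have h1 : dist w z ≤ dist x w + dist x z := by
          rw [dist_comm x w]
          exact dist_triangle w x z
        linarith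
      have hSy : ∀ w ∈ S, 2 * r ≤ dist y w := by
        intro w hw
        have hw' : ¬ dist w z < 30 * r := hw
        push_neg at hw'
        have h1 : dist w z ≤ dist y w + dist y z := by
          rw [dist_comm y w]
          exact dist_triangle w y z
        linarith
      have hTsubS : T ⊆ S := by
        intro w hw
        have hw' : ¬ dist w x ≤ 60 * r := hw
        push_neg at hw'
        simp only [hSdef, mem_compl_iff, mem_ball, not_lt]
        have h1 : dist w x ≤ dist w z + dist z x := dist_triangle w z x
        have h2 : dist z x = dist x z := dist_comm z x
        linarith
      have hsubSy : S ⊆ (ball y (2*r))ᶜ := by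
        intro w hw
        simp only [mem_compl_iff, mem_ball, not_lt]
        rw [dist_comm]
        exact hSy w hw
      have hsubSx : S ⊆ (ball x (2*r))ᶜ := by
        intro w hw
        simp only [mem_compl_iff, mem_ball, not_lt]
        rw [dist_comm]
        exact hSx w hw
      have hint_y : IntegrableOn (fun w => K y w * f w) S μ :=
        (integrableOn_kernel_mul hud hω hK hCK hf y (2*r) (by positivity)).mono_set hsubSy
      have hint_x : IntegrableOn (fun w => K x w * f w) S μ :=
        (integrableOn_kernel_mul hud hω hK hCK hf x (2*r) (by positivity)).mono_set hsubSx
      have hint_T : IntegrableOn (fun w => K x w * f w) T μ := hint_x.mono_set hTsubS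
      have hint_ST : IntegrableOn (fun w => K x w * f w) (S \ T) μ :=
        hint_x.mono_set diff_subset
      have hsplit : ∫ w in S, K x w * f w ∂μ
          = (∫ w in T, K x w * f w ∂μ) + ∫ w in S \ T, K x w * f w ∂μ := by
        rw [← setIntegral_union disjoint_sdiff_right (hSmeas.diff hTmeas) hint_T hint_ST,
          union_diff_cancel hTsubS]
      have hdiffeq : ∫ w in S, K y w * f w ∂μ
          = ((∫ w in T, K x w * f w ∂μ) + ∫ w in S \ T, K x w * f w ∂μ)
            + ∫ w in S, (K y w - K x w) * f w ∂μ := by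
        have h1 : ∫ w in S, (K y w - K x w) * f w ∂μ
            = (∫ w in S, K y w * f w ∂μ) - ∫ w in S, K x w * f w ∂μ := by
          rw [← integral_sub hint_y hint_x]
          congr 1
          funext w
          ring
        rw [h1, ← hsplit]
        ring
      rw [hdiffeq]
      refine le_trans (ENNReal.ofReal_le_ofReal norm_add₃_le) ?_
      rw [ENNReal.ofReal_add (by positivity) (norm_nonneg _),
        ENNReal.ofReal_add (by positivity) (norm_nonneg _)]
      have hp1 : ENNReal.ofReal ‖∫ w in T, K x w * f w ∂μ‖ ≤ Tsharp μ K f x := by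
        rw [Tsharp]
        exact le_iSup_of_le (60*r) (le_iSup_of_le (by positivity) le_rfl)
      have hp2 : ENNReal.ofReal ‖∫ w in S \ T, K x w * f w ∂μ‖
          ≤ ENNReal.ofReal (CK * Cl ^ 6) * M := by
        refine le_trans (hnormle _ _) (annulus_lintegral_le hud hK hCK f x x (2*r) (61*r) 5
          (by positivity) (by linarith) (by rw [dist_self]; positivity) (by nlinarith)
          (S \ T) (hSmeas.diff hTmeas) (fun w hw => hSx w hw.1) ?_)
        intro w hw
        have hw2 : w ∈ closedBall x (60*r) := notMem_compl_iff.mp hw.2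
        rw [mem_closedBall] at hw2
        rw [mem_ball]
        linarith
      have hp3 : ENNReal.ofReal ‖∫ w in S, (K y w - K x w) * f w ∂μ‖
          ≤ ENNReal.ofReal (CK * Cl ^ 8 + CK * Cl ^ 8 + Cl * diniNorm ω) * M := by
        refine le_trans (hnormle _ _) ?_
        have hdecomp : ∫⁻ w in S, ‖(K y w - K x w) * f w‖₊ ∂μ
            = (∫⁻ w in S ∩ ball x (224*r), ‖(K y w - K x w) * f w‖₊ ∂μ)
              + ∫⁻ w in S ∩ (ball x (224*r))ᶜ, ‖(K y w - K x w) * f w‖₊ ∂μ := by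
          rw [← lintegral_union (hSmeas.inter measurableSet_ball.compl)
            (disjoint_compl_right.mono inter_subset_right inter_subset_right),
            inter_union_compl]
        rw [hdecomp]
        have hnear : ∫⁻ w in S ∩ ball x (224*r), ‖(K y w - K x w) * f w‖₊ ∂μ
            ≤ ENNReal.ofReal (CK * Cl ^ 8) * M + ENNReal.ofReal (CK * Cl ^ 8) * M := by
          have hpt : ∀ w ∈ S ∩ ball x (224*r),
              (‖(K y w - K x w) * f w‖₊ : ℝ≥0∞) ≤ ‖K y w * f w‖₊ + ‖K x w * f w‖₊ := by
            intro w _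
            have heq : (K y w - K x w) * f w = K y w * f w - K x w * f w := by ring
            rw [heq, ← ENNReal.coe_add]
            exact ENNReal.coe_le_coe.mpr (nnnorm_sub_le _ _)
          refine le_trans (setLIntegral_mono' (hSmeas.inter measurableSet_ball) hpt) ?_
          have hmeas' : AEMeasurable (fun w => (‖K y w * f w‖₊ : ℝ≥0∞))
              (μ.restrict (S ∩ ball x (224*r))) :=
            (hint_y.aestronglyMeasurable.mono_measure
              (Measure.restrict_mono inter_subset_left le_rfl)).enorm
          rw [lintegral_add_left' hmeas']
          refine add_le_add ?_ ?_
          · exact annulus_lintegral_le hud hK hCK f x y (2*r) (224*r) 7 (by positivity)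
              (by linarith) (by linarith) (by nlinarith)
              _ (hSmeas.inter measurableSet_ball) (fun w hw => hSy w hw.1)
              inter_subset_right
          · exact annulus_lintegral_le hud hK hCK f x x (2*r) (224*r) 7 (by positivity)
              (by linarith) (by rw [dist_self]; positivity) (by nlinarith)
              _ (hSmeas.inter measurableSet_ball) (fun w hw => hSx w hw.1)
              inter_subset_right
        have hfar : ∫⁻ w in S ∩ (ball x (224*r))ᶜ, ‖(K y w - K x w) * f w‖₊ ∂μ
            ≤ ENNReal.ofReal (Cl * diniNorm ω) * M := by
          have hrw : ∀ w, (‖(K y w - K x w) * f w‖₊ : ℝ≥0∞) = ‖(K x w - K y w) * f w‖₊ := by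
            intro w
            rw [show (K y w - K x w) * f w = -((K x w - K y w) * f w) by ring, nnnorm_neg]
          simp only [hrw]
          refine le_trans (lintegral_mono_set ?_)
            (smooth_tail_lintegral_le hud hω hK f x y (56*r) (by positivity) hxy)
          intro w hw
          have hw2 : ¬ dist w x < 224*r := hw.2
          push_neg at hw2
          simp only [mem_compl_iff, mem_ball, not_lt]
          linarith
        calc (∫⁻ w in S ∩ ball x (224*r), ‖(K y w - K x w) * f w‖₊ ∂μ)
              + ∫⁻ w in S ∩ (ball x (224*r))ᶜ, ‖(K y w - K x w) * f w‖₊ ∂μ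
            ≤ (ENNReal.ofReal (CK * Cl ^ 8) * M + ENNReal.ofReal (CK * Cl ^ 8) * M)
              + ENNReal.ofReal (Cl * diniNorm ω) * M := add_le_add hnear hfar
          _ = ENNReal.ofReal (CK * Cl ^ 8 + CK * Cl ^ 8 + Cl * diniNorm ω) * M := by
              rw [haddM _ _ (by positivity) (by positivity),
                haddM _ _ (by positivity) (by positivity)]
      calc ENNReal.ofReal ‖∫ w in T, K x w * f w ∂μ‖
            + ENNReal.ofReal ‖∫ w in S \ T, K x w * f w ∂μ‖
            + ENNReal.ofReal ‖∫ w in S, (K y w - K x w) * f w ∂μ‖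
          ≤ Tsharp μ K f x + ENNReal.ofReal (CK * Cl ^ 6) * M
            + ENNReal.ofReal (CK * Cl ^ 8 + CK * Cl ^ 8 + Cl * diniNorm ω) * M :=
            add_le_add (add_le_add hp1 hp2) hp3
        _ = Tsharp μ K f x + (ENNReal.ofReal (CK * Cl ^ 6) * M
            + ENNReal.ofReal (CK * Cl ^ 8 + CK * Cl ^ 8 + Cl * diniNorm ω) * M) := by
            rw [add_assoc]
        _ ≤ Tsharp μ K f x + E := by
            refine add_le_add_right ?_ _
            rw [haddM _ _ (by positivity) (by positivity)]
            refine hEbound _ ?_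
            have h6 := hpowle 6 (by omega)
            have h8 := hpowle 8 (by omega)
            have h1 := hpowle 1 (by omega)
            have hP : (0:ℝ) < Cl ^ (n₁ + n₂ + 10) := pow_pos hCl0 _
            have hC6 : CK * Cl ^ 6 ≤ CK * Cl ^ (n₁ + n₂ + 10) :=
              mul_le_mul_of_nonneg_left h6 hCK
            have hC8 : CK * Cl ^ 8 ≤ CK * Cl ^ (n₁ + n₂ + 10) :=
              mul_le_mul_of_nonneg_left h8 hCK
            have hD : Cl * diniNorm ω ≤ Cl ^ (n₁ + n₂ + 10) * diniNorm ω := by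
              have := hpowle 1 (by omega)
              rw [pow_one] at this
              exact mul_le_mul_of_nonneg_right this hdini
            nlinarith
    · -- Direction 2 : Tsharp ≤ grandMax + E
      rw [Tsharp]
      refine iSup_le fun ε => iSup_le fun hε => ?_
      by_cases hint : IntegrableOn (fun w => K x w * f w) (closedBall x ε)ᶜ μ
      swap
      · rw [integral_undef hint]
        simp only [norm_zero, ENNReal.ofReal_zero]
        exact zero_le
      by_cases hcase : ε ≤ 2 * A0 ^ (-(k₀:ℤ))
      · -- small ε : compare with a cell of comparable size
        obtain ⟨N, hN⟩ := pow_unbounded_of_one_lt (2/ε) hA0gt1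
        have hjlt : ∀ j : ℕ, k₀ ≤ j → ε ≤ 2 * A0 ^ (-(j:ℤ)) → j < N := by
          intro j _ hj
          have h1 : ε ≤ 2 * ((A0:ℝ) ^ j)⁻¹ := by rwa [zpow_neg, zpow_natCast] at hj
          have hp : (0:ℝ) < A0 ^ j := pow_pos hA0pos j
          have h2 : A0 ^ j * ε ≤ 2 := by
            calc A0 ^ j * ε ≤ A0 ^ j * (2 * ((A0:ℝ) ^ j)⁻¹) := by nlinarith
              _ = 2 := by field_simp
          have h3 : (A0:ℝ) ^ j < A0 ^ N := by
            have h4 : (A0:ℝ) ^ j ≤ 2/ε := by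
              rw [le_div_iff₀ hε]
              exact h2
            linarith
          exact (pow_lt_pow_iff_right₀ hA0gt1).mp h3
        have hk₀N : k₀ < N := hjlt k₀ le_rfl hcase
        set Pr : ℕ → Prop := fun j => k₀ ≤ j ∧ ε ≤ 2 * A0 ^ (-(j:ℤ)) with hPrdef
        have hPk : Pr (Nat.findGreatest Pr N) :=
          Nat.findGreatest_spec (le_of_lt hk₀N) ⟨le_rfl, hcase⟩
        set k := Nat.findGreatest Pr N with hkdef
        have hk₀k : k₀ ≤ k := hPk.1
        have hεk : ε ≤ 2 * A0 ^ (-(k:ℤ)) := hPk.2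
        have hkN : k < N := hjlt k hk₀k hεk
        have hknext : ¬ Pr (k+1) :=
          Nat.findGreatest_is_greatest (by rw [← hkdef]; exact Nat.lt_succ_self k) (by omega)
        have hεk1 : 2 * A0 ^ (-(k:ℤ) - 1) < ε := by
          by_contra hc
          push_neg at hc
          refine hknext ⟨by omega, ?_⟩
          rw [show (-((k:ℕ)+1:ℕ):ℤ) = -(k:ℤ) - 1 by push_cast; ring]
          exact hc
        have hupos : (0:ℝ) < A0 ^ (-(k:ℤ)) := zpow_pos hA0pos _
        have hrel : 2 * A0 ^ (-(k:ℤ)) / A0 < ε := by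
          have heq : A0 ^ (-(k:ℤ) - 1) = A0 ^ (-(k:ℤ)) / A0 := by
            rw [zpow_sub₀ (ne_of_gt hA0pos), zpow_one]
          rw [heq] at hεk1
          calc 2 * A0 ^ (-(k:ℤ)) / A0 = 2 * (A0 ^ (-(k:ℤ)) / A0) := by ring
            _ < ε := hεk1
        obtain ⟨P, hP, hxP⟩ : ∃ P ∈ D.cells k, x ∈ P := by
          have hcov := D.cover k
          have hmem : x ∈ ⋃₀ D.cells k := by rw [hcov]; exact hxW
          simpa [mem_sUnion] using hmem
        have hPQ : P ⊆ Q₀ := by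
          rcases eq_or_lt_of_le hk₀k with heq | hlt
          · have hQk : Q₀ ∈ D.cells k := heq ▸ hQ₀
            have hPQ' : P = Q₀ := by
              by_contra hne
              exact (Set.disjoint_left.mp (D.pairwise_disjoint k P hP Q₀ hQk hne) hxP hx).elim
            exact hPQ' ▸ subset_rfl
          · rcases D.nested k₀ k hlt P hP Q₀ hQ₀ with h | h
            · exact h
            · exact (Set.disjoint_left.mp h hxP hx).elim
        have hrpos : 0 < D.radius k P :=
          lt_of_lt_of_le (zpow_pos hA0pos _) (D.radius_lb k P hP)
        set r := D.radius k P with hrdef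
        set z := D.center k P with hzdef
        have hxz : dist x z < 28 * r := by
          have h := ((D.subset_ball k P hP) hxP).2
          rwa [mem_ball] at h
        have hεr2 : ε ≤ 2 * r := le_trans hεk (by nlinarith [D.radius_lb k P hP])
        have hru : r ≤ C0 * A0 ^ (-(k:ℤ)) := D.radius_ub k P hP
        set U := (closedBall x ε)ᶜ with hUdef
        have hUmeas : MeasurableSet U := measurableSet_closedBall.compl
        set B30 := ball z (30 * r) with hB30def
        have hsub : closedBall x ε ⊆ B30 := by
          intro w hw
          rw [mem_closedBall] at hw
          rw [hB30def, mem_ball]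
          have h := dist_triangle w x z
          linarith
        have hsub2 : B30ᶜ ⊆ U := compl_subset_compl.mpr hsub
        have hUeq : U ∩ B30ᶜ = B30ᶜ := inter_eq_self_of_subset_right hsub2
        have hsplit : ∫ w in U, K x w * f w ∂μ
            = (∫ w in U ∩ B30, K x w * f w ∂μ) + ∫ w in B30ᶜ, K x w * f w ∂μ := by
          rw [← hUeq,
            ← setIntegral_union (disjoint_compl_right.mono inter_subset_right inter_subset_right)
              (hUmeas.inter measurableSet_ball.compl) (hint.mono_set inter_subset_left)
              (hint.mono_set inter_subset_left),
            inter_union_compl]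
        rw [hsplit]
        refine le_trans (ENNReal.ofReal_le_ofReal (norm_add_le _ _)) ?_
        rw [ENNReal.ofReal_add (norm_nonneg _) (norm_nonneg _), add_comm]
        refine add_le_add ?_ ?_
        · -- ∫ over B30ᶜ is a grandMax candidate (with y = x)
          rw [grandMax, Set.indicator_of_mem hx]
          exact le_iSup_of_le k (le_iSup_of_le P (le_iSup_of_le hP (le_iSup_of_le hxP
            (le_iSup_of_le hPQ (le_iSup_of_le x (le_iSup_of_le hxP le_rfl))))))
        · -- the annulus piece
          have hRn : 58 * r ≤ 2 ^ n₂ * ε := by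
            have h1 : r ≤ C0 * A0 ^ (-(k:ℤ)) := hru
            have h2 : 2 * A0 ^ (-(k:ℤ)) < ε * A0 := by
              rw [div_lt_iff₀ hA0pos] at hrel
              linarith
            have h3 : (0:ℝ) < C0 := by linarith
            have h4 : 29 * C0 * A0 < 2 ^ n₂ := hn₂
            have h5 : (0:ℝ) < A0 ^ (-(k:ℤ)) := hupos
            have ha : 58 * r ≤ 58 * (C0 * A0 ^ (-(k:ℤ))) := by nlinarith
            have hb : 58 * (C0 * A0 ^ (-(k:ℤ))) < 29 * C0 * A0 * ε := by nlinarith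
            have hc : 29 * C0 * A0 * ε ≤ 2 ^ n₂ * ε := by nlinarith
            linarith
          have hS1 : ∀ w ∈ U ∩ B30, ε ≤ dist x w := by
            intro w hw
            have hw1 : ¬ dist w x ≤ ε := hw.1
            push_neg at hw1
            rw [dist_comm]
            linarith
          have hS2 : U ∩ B30 ⊆ ball x (58*r) := by
            intro w hw
            have hw2 : dist w z < 30 * r := hw.2
            rw [mem_ball]
            have h := dist_triangle w z x
            have h2 : dist z x = dist x z := dist_comm z x
            linarith
          have hann := annulus_lintegral_le hud hK hCK f x x ε (58*r) n₂ hε (by linarith)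
            (by rw [dist_self]; linarith) hRn (U ∩ B30) (hUmeas.inter measurableSet_ball) hS1 hS2
          refine le_trans (hnormle _ _) (le_trans hann (hEbound _ ?_))
          have h1 := hpowle (n₂+1) (by omega)
          have hPp : (0:ℝ) < Cl ^ (n₁ + n₂ + 10) := pow_pos hCl0 _
          nlinarith [mul_le_mul_of_nonneg_left h1 hCK]
      · -- large ε
        push_neg at hcase
        by_cases hbig : 58 * D.radius k₀ Q₀ ≤ ε
        · have hzero : ∫ w in (closedBall x ε)ᶜ, K x w * f w ∂μ = 0 := by
            apply setIntegral_eq_zero_of_forall_eq_zero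
            intro w hw
            have hfw : f w = 0 := by
              apply hf0
              intro hmem
              rw [mem_ball] at hmem
              have h1 : dist w x ≤ dist w (D.center k₀ Q₀) + dist (D.center k₀ Q₀) x :=
                dist_triangle _ _ _
              have h2 : ¬ dist w x ≤ ε := hw
              rw [dist_comm (D.center k₀ Q₀) x] at h1
              push_neg at h2
              linarith
            rw [hfw, mul_zero]
          rw [hzero]
          simp only [norm_zero, ENNReal.ofReal_zero]
          exact zero_le
        · push_neg at hbig
          set r₀ := D.radius k₀ Q₀ with hr₀def
          set z₀ := D.center k₀ Q₀ with hz₀def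
          have hεlow : 2 * r₀ / C0 < ε := by
            have h1 : r₀ ≤ C0 * A0 ^ (-(k₀:ℤ)) := D.radius_ub k₀ Q₀ hQ₀
            have h3 : (0:ℝ) < C0 := by linarith
            rw [div_lt_iff₀ h3]
            nlinarith
          set U := (closedBall x ε)ᶜ with hUdef
          have hUmeas : MeasurableSet U := measurableSet_closedBall.compl
          set B := ball z₀ (30 * r₀) with hBdef
          have hsplit : ∫ w in U, K x w * f w ∂μ
              = (∫ w in U ∩ B, K x w * f w ∂μ) + ∫ w in U ∩ Bᶜ, K x w * f w ∂μ := by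
            rw [← setIntegral_union
              (disjoint_compl_right.mono inter_subset_right inter_subset_right)
              (hUmeas.inter measurableSet_ball.compl) (hint.mono_set inter_subset_left)
              (hint.mono_set inter_subset_left), inter_union_compl]
          have hzero : ∫ w in U ∩ Bᶜ, K x w * f w ∂μ = 0 := by
            apply setIntegral_eq_zero_of_forall_eq_zero
            intro w hw
            rw [hf0 w hw.2, mul_zero]
          rw [hsplit, hzero, add_zero]
          have hRn : 58 * r₀ ≤ 2 ^ n₁ * ε := by
            have h3 : (0:ℝ) < C0 := by linarith
            have h4 : 29 * C0 < 2 ^ n₁ := hn₁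
            rw [div_lt_iff₀ h3] at hεlow
            have ha : 58 * r₀ < 29 * C0 * ε := by nlinarith
            have hb : 29 * C0 * ε ≤ 2 ^ n₁ * ε := by nlinarith
            linarith
          have hS1 : ∀ w ∈ U ∩ B, ε ≤ dist x w := by
            intro w hw
            have hw1 : ¬ dist w x ≤ ε := hw.1
            push_neg at hw1
            rw [dist_comm]
            linarith
          have hS2 : U ∩ B ⊆ ball x (58*r₀) := by
            intro w hw
            have hw2 : dist w z₀ < 30 * r₀ := hw.2
            rw [mem_ball]
            have h := dist_triangle w z₀ x
            have h2 : dist z₀ x = dist x z₀ := dist_comm z₀ x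
            linarith [hxz₀]
          have hann := annulus_lintegral_le hud hK hCK f x x ε (58*r₀) n₁ hε hbig.le
            (by rw [dist_self]; positivity) hRn (U ∩ B) (hUmeas.inter measurableSet_ball) hS1 hS2
          refine le_trans (hnormle _ _) (le_trans hann (le_trans (hEbound _ ?_) le_add_self))
          have h1 := hpowle (n₁+1) (by omega)
          have hPp : (0:ℝ) < Cl ^ (n₁ + n₂ + 10) := pow_pos hCl0 _
          nlinarith [mul_le_mul_of_nonneg_left h1 hCK]
end

section
/- Let (X,d,μ) be upper doubling with dominating function λ and constant C_λ, let K: X×X∖Δ → ℂ satisfy the size bound |K(x,y)| ≤ C_K/λ(x,d(x,y)), and let α ≥ 200 and Λ ≥ 1. Then there is a constant C depending only on C_K, C_λ, α, Λ such that the following holds: whenever B = B(z,r) and B̂ = B(ẑ,r̂) are balls with B(z,30r) ⊂ B(ẑ,30r̂) and r ≤ r̂ ≤ Λ·r, x ∈ B(z,28r) ∩ B(ẑ,28r̂), and f ∈ L¹_loc(μ), one has ∫_{B(ẑ,30r̂)∖B(z,30r)} |K(x,y)|·|f(y)| dμ(y) ≤ C·λ(ẑ, α·r̂)^{−1}·∫_{B(ẑ,30r̂)}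 |f| dμ; equivalently, this quantity is at most C·Θ(B̂)·A(f,B̂) where Θ(B̂) := μ(B(ẑ,αr̂))/λ(ẑ, α·r̂) and A(f,B̂) := μ(B(ẑ,αr̂))^{−1} ∫_{B(ẑ,30r̂)} |f| dμ. -/
open MeasureTheory Metric Set ENNReal

open MeasureTheory Metric Set ENNReal in
/-- Estimate for consecutive scales: the kernel integrated against `f` over the annulus
between two nested enlarged balls is controlled by `Θ(B̂) A(f,B̂)`. -/
theorem consecutive_scales_estimate
    {X : Type*} [MetricSpace X] [MeasurableSpace X] [BorelSpace X]
    (μ : Measure X) [IsLocallyFiniteMeasure μ]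
    (lam : X → ℝ → ℝ) (Cl : ℝ) (hud : IsUpperDoubling μ lam Cl)
    (K : X → X → ℂ) (CK : ℝ)
    (hK : ∀ x y, x ≠ y → ‖K x y‖ ≤ CK / lam x (dist x y))
    (α : ℝ) (hα : 200 ≤ α) (Λ : ℝ) (hΛ : 1 ≤ Λ) :
    ∃ C : ℝ, 0 < C ∧
      ∀ (z z' : X) (r s : ℝ), 0 < r →
        ball z (30 * r) ⊆ ball z' (30 * s) → r ≤ s → s ≤ Λ * r →
        ∀ x ∈ ball z (28 * r) ∩ ball z' (28 * s),
          ∀ f : X → ℂ, (∀ (c : X) (R : ℝ), IntegrableOn f (ball c R) μ) →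
            (∫⁻ y in ball z' (30 * s) \ ball z (30 * r), ‖K x y‖₊ * ‖f y‖₊ ∂μ) ≤
                ENNReal.ofReal C *
                  ((∫⁻ y in ball z' (30 * s), ‖f y‖₊ ∂μ) /
                    ENNReal.ofReal (lam z' (α * s))) ∧
            (∫⁻ y in ball z' (30 * s) \ ball z (30 * r), ‖K x y‖₊ * ‖f y‖₊ ∂μ) ≤
                ENNReal.ofReal C * (theta μ lam α z' s * cellAvg μ α f z' s) := by
  have hCl : (0:ℝ) < Cl := zero_lt_one.trans hud.one_lt
  set N : ℕ := ⌈α * Λ⌉₊ + 1 with hN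
  set CK' : ℝ := max CK 0 with hCK'
  have hCK'0 : (0:ℝ) ≤ CK' := le_max_right _ _
  refine ⟨(CK' + 1) * Cl ^ (N + 1), by positivity, ?_⟩
  intro z z' r s hr hsub hrs hsΛ x hx f hf
  have hs : 0 < s := hr.trans_le hrs
  have hα0 : (0:ℝ) < α := by linarith
  have hαs : 0 < α * s := by positivity
  have hlampos := hud.lam_pos z' (α * s) hαs
  have iter : ∀ (w : X) (ρ : ℝ), 0 < ρ → ∀ n : ℕ, lam w ρ ≤ Cl ^ n * lam w (ρ / 2 ^ n) := by
    intro w ρ hρ n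
    induction n with
    | zero => simp
    | succ n ih =>
      have h2 : (0:ℝ) < ρ / 2 ^ n := by positivity
      calc lam w ρ ≤ Cl ^ n * lam w (ρ / 2 ^ n) := ih
        _ ≤ Cl ^ n * (Cl * lam w (ρ / 2 ^ n / 2)) :=
            mul_le_mul_of_nonneg_left (hud.halving w (ρ / 2 ^ n) h2) (by positivity)
        _ = Cl ^ (n + 1) * lam w (ρ / 2 ^ (n + 1)) := by
            rw [pow_succ (2:ℝ), ← div_div]; ring
  obtain ⟨hxz, hxz'⟩ := hx
  have key : ∀ y ∈ ball z' (30 * s) \ ball z (30 * r),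
      ‖K x y‖ ≤ (CK' + 1) * Cl ^ (N + 1) / lam z' (α * s) := by
    intro y hy
    have hyz : ¬ dist y z < 30 * r := by simpa [mem_ball] using hy.2
    have hyz' : 30 * r ≤ dist y z := not_lt.mp hyz
    have h1 : dist x z < 28 * r := mem_ball.mp hxz
    have htri : dist y z ≤ dist y x + dist x z := dist_triangle y x z
    have hdxy : 2 * r ≤ dist x y := by
      rw [dist_comm x y]; linarith
    have hxy0 : 0 < dist x y := by linarith
    have hne : x ≠ y := by
      intro h; rw [h, dist_self] at hxy0; exact lt_irrefl _ hxy0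
    have h2r : (0:ℝ) < 2 * r := by linarith
    have hl2r := hud.lam_pos x (2 * r) h2r
    have hldist := hud.lam_pos x (dist x y) hxy0
    have hK1 : ‖K x y‖ ≤ CK' / lam x (dist x y) :=
      (hK x y hne).trans (by gcongr; exact le_max_left _ _)
    have hK2 : CK' / lam x (dist x y) ≤ CK' / lam x (2 * r) := by
      gcongr
      exact hud.lam_mono x (2 * r) (dist x y) h2r hdxy
    have hch : lam z' (α * s) ≤ Cl ^ (N + 1) * lam x (2 * r) := by
      have hdzx : dist z' x ≤ α * s := by
        have h2 : dist x z' < 28 * s := mem_ball.mp hxz'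
        rw [dist_comm]; nlinarith
      have s1 : lam z' (α * s) ≤ Cl * lam x (α * s) := hud.close z' x (α * s) hαs hdzx
      have s2 : lam x (α * s) ≤ Cl ^ N * lam x (α * s / 2 ^ N) := iter x _ hαs N
      have s3 : α * s / 2 ^ N ≤ 2 * r := by
        have hN2 : α * Λ ≤ (2:ℝ) ^ N := by
          have h1 : α * Λ ≤ (N : ℝ) := by
            have h := Nat.le_ceil (α * Λ)
            have : ((⌈α * Λ⌉₊ : ℝ)) ≤ (N : ℝ) := by
              rw [hN]; push_cast; linarith
            linarith
          have h2 : (N : ℝ) ≤ 2 ^ N := by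
            exact_mod_cast (Nat.lt_two_pow_self (n := N)).le
          linarith
        rw [div_le_iff₀ (by positivity)]
        nlinarith [mul_le_mul_of_nonneg_left hsΛ hα0.le]
      have s4 : lam x (α * s / 2 ^ N) ≤ lam x (2 * r) :=
        hud.lam_mono x _ _ (by positivity) s3
      calc lam z' (α * s) ≤ Cl * lam x (α * s) := s1
        _ ≤ Cl * (Cl ^ N * lam x (α * s / 2 ^ N)) :=
            mul_le_mul_of_nonneg_left s2 hCl.le
        _ ≤ Cl * (Cl ^ N * lam x (2 * r)) :=
            mul_le_mul_of_nonneg_left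
              (mul_le_mul_of_nonneg_left s4 (by positivity)) hCl.le
        _ = Cl ^ (N + 1) * lam x (2 * r) := by ring
    have hfin : CK' / lam x (2 * r) ≤ (CK' + 1) * Cl ^ (N + 1) / lam z' (α * s) := by
      rw [div_le_div_iff₀ hl2r hlampos]
      have h3 : CK' * lam z' (α * s) ≤ CK' * (Cl ^ (N + 1) * lam x (2 * r)) :=
        mul_le_mul_of_nonneg_left hch hCK'0
      nlinarith [pow_pos hCl (N + 1)]
    linarith [hK1.trans hK2]
  have hmeas : MeasurableSet (ball z' (30 * s) \ ball z (30 * r)) :=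
    measurableSet_ball.diff measurableSet_ball
  set C : ℝ := (CK' + 1) * Cl ^ (N + 1) with hC
  set L := ENNReal.ofReal (lam z' (α * s)) with hL
  set I := ∫⁻ y in ball z' (30 * s), ‖f y‖₊ ∂μ with hI
  have main : (∫⁻ y in ball z' (30 * s) \ ball z (30 * r), ‖K x y‖₊ * ‖f y‖₊ ∂μ) ≤
      ENNReal.ofReal C * (I / L) := by
    calc (∫⁻ y in ball z' (30 * s) \ ball z (30 * r), ‖K x y‖₊ * ‖f y‖₊ ∂μ)
        ≤ ∫⁻ y in ball z' (30 * s) \ ball z (30 * r),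
            ENNReal.ofReal (C / lam z' (α * s)) * ‖f y‖₊ ∂μ := by
          refine setLIntegral_mono' hmeas fun y hy => ?_
          gcongr
          rw [← ENNReal.ofReal_coe_nnreal, coe_nnnorm]
          exact ENNReal.ofReal_le_ofReal (key y hy)
      _ = ENNReal.ofReal (C / lam z' (α * s)) *
            ∫⁻ y in ball z' (30 * s) \ ball z (30 * r), ‖f y‖₊ ∂μ :=
          lintegral_const_mul' _ _ ofReal_ne_top
      _ ≤ ENNReal.ofReal (C / lam z' (α * s)) * I := by
          gcongr
          exact lintegral_mono_set diff_subset
      _ = ENNReal.ofReal C * (I / L) := by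
          rw [ENNReal.ofReal_div_of_pos hlampos, hL, div_eq_mul_inv, div_eq_mul_inv]
          ring
  refine ⟨main, ?_⟩
  by_cases h0 : μ (ball z' (α * s)) = 0
  · have hsub30 : ball z' (30 * s) ⊆ ball z' (α * s) := ball_subset_ball (by nlinarith)
    have hnull : μ (ball z' (30 * s) \ ball z (30 * r)) = 0 :=
      measure_mono_null (diff_subset.trans hsub30) h0
    rw [setLIntegral_measure_zero _ _ hnull]
    exact zero_le
  · have hfin : μ (ball z' (α * s)) ≠ ⊤ :=
      ((hud.measure_le z' (α * s) hαs).trans_lt ofReal_lt_top).ne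
    have heq : theta μ lam α z' s * cellAvg μ α f z' s = I / L := by
      unfold theta cellAvg
      rw [← hI, ← hL, div_eq_mul_inv, div_eq_mul_inv, div_eq_mul_inv]
      calc μ (ball z' (α * s)) * L⁻¹ * (I * (μ (ball z' (α * s)))⁻¹)
          = I * L⁻¹ * (μ (ball z' (α * s)) * (μ (ball z' (α * s)))⁻¹) := by ring
        _ = I * L⁻¹ := by rw [ENNReal.mul_inv_cancel h0 hfin, mul_one]
    rw [heq]
    exact main
end
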